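/- arXiv:2510.16330 — 3 statements merged into one kernel-verified Lean document; each statement's English description precedes it below -/
import Mathlib

section
/- A hypergraph H is 𝓗_∞ ITS free if and only if LICL(H^c) < 6, where H^c is the clique completion of H and LICL denotes the length of a longest induced cycle. -/
open scoped Classical

noncomputable section

/-- A hypergraph: a finite vertex set and a finite set of hyperedges, with vertices in `ℕ`. -/
structure HGraph where
  verts : Finset ℕ
  edges : Finset (Finset ℕ)

namespace HGraph

/-- Well-formedness: every hyperedge is a nonempty subset of the vertex set. -/
def Good (G : HGraph) : Prop := ∀ e ∈ G.edges, e ⊆ G.verts ∧ e.Nonempty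

/-- The rank of a hypergraph: the maximum arity of a hyperedge. -/
def rank (G : HGraph) : ℕ := G.edges.sup Finset.card

/-- The induced `l`-trimmed subhypergraph of `G` on `S`. -/
def trim (G : HGraph) (S : Finset ℕ) (l : ℕ∞) : HGraph :=
  ⟨G.verts ∩ S,
    (G.edges.filter fun e => ((e \ S).card : ℕ∞) ≤ l ∧ (e ∩ S).Nonempty).image fun e => e ∩ S⟩

/-- The degree of a vertex: the number of hyperedges containing it. -/
def degree (G : HGraph) (v : ℕ) : ℕ := (G.edges.filter fun e => v ∈ e).card

/-- The `l`-degeneracy of a hypergraph: the least `κ` such that every nonempty induced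
`l`-trimmed subhypergraph has a vertex of degree at most `κ`. -/
def degeneracy (G : HGraph) (l : ℕ∞) : ℕ :=
  sInf {κ : ℕ | ∀ S ⊆ G.verts, S.Nonempty → ∃ v ∈ S, (G.trim S l).degree v ≤ κ}

/-- Two vertices are adjacent if some hyperedge contains both. -/
def Adj (G : HGraph) (u v : ℕ) : Prop := ∃ e ∈ G.edges, u ∈ e ∧ v ∈ e

/-- A hypergraph is connected if any two vertices are joined by a path of adjacencies. -/
def Connected (G : HGraph) : Prop :=
  ∀ u ∈ G.verts, ∀ v ∈ G.verts, Relation.ReflTransGen G.Adj u v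

/-- `D` is a connected component of `G`. -/
def IsComponent (G : HGraph) (D : Finset ℕ) : Prop :=
  ∃ v ∈ G.verts, D = G.verts.filter fun u => Relation.ReflTransGen G.Adj v u

/-- The induced subhypergraph (only hyperedges entirely inside `S`). -/
def induce (G : HGraph) (S : Finset ℕ) : HGraph :=
  ⟨G.verts ∩ S, G.edges.filter fun e => e ⊆ S⟩

end HGraph

/-- `f` is a homomorphism from `H` to `G`. -/
def IsHom (H G : HGraph) (f : ℕ → ℕ) : Prop :=
  (∀ v ∈ H.verts, f v ∈ G.verts) ∧ ∀ e ∈ H.edges, e.image f ∈ G.edges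

/-- `Hom(G,H)`: the number of homomorphisms from `H` to `G`
(normalized to be `0` off `V(H)` so that the set is finite). -/
def homCount (G H : HGraph) : ℕ :=
  Set.ncard {f : ℕ → ℕ | IsHom H G f ∧ ∀ v ∉ H.verts, f v = 0}

/-- `Homr(G,H)`: the number of arity-preserving homomorphisms from `H` to `G`. -/
def homrCount (G H : HGraph) : ℕ :=
  Set.ncard {f : ℕ → ℕ | IsHom H G f ∧ (∀ e ∈ H.edges, (e.image f).card = e.card) ∧
    ∀ v ∉ H.verts, f v = 0}

/-- HGraph isomorphism. -/
def Isomorphic (H H' : HGraph) : Prop :=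
  ∃ f : ℕ → ℕ, Set.BijOn f ↑H.verts ↑H'.verts ∧
    H'.edges = H.edges.image fun e => e.image f

/-- The quotient of `H` under the partition of `V(H)` into the fibers of `f`. -/
def quotientBy (H : HGraph) (f : ℕ → ℕ) : HGraph :=
  ⟨H.verts.image f, H.edges.image fun e => e.image f⟩

/-- `H'` is a quotient of `H` (by some partition of `V(H)`). -/
def IsQuotient (H H' : HGraph) : Prop := ∃ f : ℕ → ℕ, H' = quotientBy H f

/-- Each fiber of `f` induces a connected (trimmed) subhypergraph of `H`. -/
def ContractMap (H : HGraph) (f : ℕ → ℕ) : Prop :=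
  ∀ w : ℕ, (H.trim (H.verts.filter fun v => f v = w) ⊤).Connected

/-- `H'` belongs to the contract set `Q^c(H)`: it is a quotient of `H` by a partition
all of whose parts induce connected subhypergraphs of `H`. -/
def IsContractQuotient (H H' : HGraph) : Prop :=
  ∃ f : ℕ → ℕ, ContractMap H f ∧ H' = quotientBy H f

/-- `α(H')`: the number of partitions `τ` of `V(H)` with connected parts with `H/τ ≅ H'`. -/
def alphaCount (H H' : HGraph) : ℕ :=
  Set.ncard {P : Finset (Finset ℕ) | ∃ f : ℕ → ℕ, ContractMap H f ∧
    Isomorphic (quotientBy H f) H' ∧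
    P = (H.verts.image f).image fun w => H.verts.filter fun v => f v = w}

/-- `|Aut(H')|`: the number of automorphisms of `H'`. -/
def autCount (H' : HGraph) : ℕ :=
  Set.ncard {f : ℕ → ℕ | (∀ v ∉ H'.verts, f v = v) ∧ Set.BijOn f ↑H'.verts ↑H'.verts ∧
    H'.edges.image (fun e => e.image f) = H'.edges}

/-- The arc relation of the `l`-skeleton of the DAH obtained by ordering `G` by `π`. -/
def SkelArc (G : HGraph) (π : ℕ → ℕ) (l : ℕ∞) (u v : ℕ) : Prop :=
  ∃ e ∈ G.edges, u ∈ e ∧ v ∈ e ∧ π u < π v ∧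
    ((e.filter fun w => π w < π u).card : ℕ∞) ≤ l

/-- The `l`-outdegree of a vertex in the DAH `(G, π)`. -/
def loutdeg (G : HGraph) (π : ℕ → ℕ) (l : ℕ∞) (u : ℕ) : ℕ :=
  (G.verts.filter fun v => SkelArc G π l u v).card

/-- Vertices reachable from `v` by a directed path. -/
def Reach (Adj : ℕ → ℕ → Prop) (v : ℕ) : Set ℕ := {u | Relation.ReflTransGen Adj v u}

/-- Vertices reachable from a set `A`. -/
def ReachSet (Adj : ℕ → ℕ → Prop) (A : Set ℕ) : Set ℕ :=
  {u | ∃ a ∈ A, Relation.ReflTransGen Adj a u}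

/-- The sources of a DAG: vertices with no incoming arc. -/
def sourcesOf (V : Finset ℕ) (Adj : ℕ → ℕ → Prop) : Finset ℕ :=
  V.filter fun v => ¬ ∃ u ∈ V, Adj u v

/-- `b` lies on the (unique) path between `i` and `j` in `T`. -/
def OnPath {n : ℕ} (T : SimpleGraph (Fin n)) (i j b : Fin n) : Prop :=
  ∃ p : T.Walk i j, p.IsPath ∧ b ∈ p.support

/-- `(T, β)` is a DAG-tree decomposition of the DAG `(V, Adj)`. -/
def IsDTD (V : Finset ℕ) (Adj : ℕ → ℕ → Prop) {n : ℕ}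
    (T : SimpleGraph (Fin n)) (β : Fin n → Finset ℕ) : Prop :=
  T.IsTree ∧ (∀ i, β i ⊆ sourcesOf V Adj) ∧ (∀ s ∈ sourcesOf V Adj, ∃ i, s ∈ β i) ∧
    ∀ i j b, OnPath T i j b →
      ReachSet Adj ↑(β i) ∩ ReachSet Adj ↑(β j) ⊆ ReachSet Adj ↑(β b)

/-- The DAG-treewidth of the DAG `(V, Adj)`. -/
def dagTreewidth (V : Finset ℕ) (Adj : ℕ → ℕ → Prop) : ℕ :=
  sInf {w : ℕ | ∃ (n : ℕ) (T : SimpleGraph (Fin n)) (β : Fin n → Finset ℕ),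
    IsDTD V Adj T β ∧ ∀ i, (β i).card ≤ w}

/-- The `l`-DAG-treewidth of the DAH `(H, π)`. -/
def ldtwOriented (H : HGraph) (π : ℕ → ℕ) (l : ℕ∞) : ℕ :=
  dagTreewidth H.verts (SkelArc H π l)

/-- The `l`-DAG-treewidth of an undirected hypergraph:
the maximum over all acyclic orientations. -/
def ldtw (H : HGraph) (l : ℕ∞) : ℕ :=
  sSup {w : ℕ | ∃ π : ℕ → ℕ, Set.InjOn π ↑H.verts ∧ w = ldtwOriented H π l}

/-- `f` is a DAH homomorphism from `(K, πK)` to `(G, πG)`. -/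
def IsDAHHom (K : HGraph) (πK : ℕ → ℕ) (G : HGraph) (πG : ℕ → ℕ)
    (f : ℕ → ℕ) : Prop :=
  (∀ v ∈ K.verts, f v ∈ G.verts) ∧
    ∀ e ∈ K.edges, e.image f ∈ G.edges ∧
      ∀ u ∈ e, ∀ v ∈ e, πK u < πK v → πG (f u) < πG (f v)

/-- The number of DAH homomorphisms from `(K, πK)` to `(G, πG)`. -/
def dahHomCount (G : HGraph) (πG : ℕ → ℕ) (K : HGraph) (πK : ℕ → ℕ) : ℕ :=
  Set.ncard {f : ℕ → ℕ | IsDAHHom K πK G πG f ∧ ∀ v ∉ K.verts, f v = 0}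

/-- Two orderings of `H` give isomorphic acyclic orientations. -/
def OrientIso (H : HGraph) (π₁ π₂ : ℕ → ℕ) : Prop :=
  ∃ g : ℕ → ℕ, Set.BijOn g ↑H.verts ↑H.verts ∧
    (H.edges.image fun e => e.image g) = H.edges ∧
    ∀ u ∈ H.verts, ∀ v ∈ H.verts, (π₁ u < π₁ v ↔ π₂ (g u) < π₂ (g v))

/-- The vertices of `H` that are `l`-reachable from the set `S` in the DAH `(H, π)`. -/
def reachClosure (H : HGraph) (π : ℕ → ℕ) (l : ℕ∞) (S : Set ℕ) : Finset ℕ :=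
  H.verts.filter fun v => v ∈ ReachSet (SkelArc H π l) S

/-- `H⃗[S]_l`: the sub-DAH induced (0-trimmed) on the vertices `l`-reachable from `S`. -/
def subDAH (H : HGraph) (π : ℕ → ℕ) (l : ℕ∞) (S : Set ℕ) : HGraph :=
  H.trim (reachClosure H π l S) 0

/-- `B'` is a child of `B` in the tree `T` rooted at `root`. -/
def IsChild {n : ℕ} (T : SimpleGraph (Fin n)) (root B B' : Fin n) : Prop :=
  T.Adj B B' ∧ OnPath T root B' B

/-- `Γ(B)`: the union of the bags in the subtree of `T` rooted at `B`. -/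
def GammaSet {n : ℕ} (T : SimpleGraph (Fin n)) (root : Fin n)
    (β : Fin n → Finset ℕ) (B : Fin n) : Set ℕ :=
  {s | ∃ i, OnPath T root i B ∧ s ∈ β i}

/-- `ext(φ, K⃗, G⃗)` relative to the agreement domain `dom`: the number of DAH homomorphisms
from `(K, πK)` to `(G, πG)` that agree with `φ` on `V(K) ∩ dom`. -/
def extCount (K : HGraph) (πK : ℕ → ℕ) (G : HGraph) (πG : ℕ → ℕ)
    (dom : Set ℕ) (φ : ℕ → ℕ) : ℕ :=
  Set.ncard {ψ : ℕ → ℕ | IsDAHHom K πK G πG ψ ∧ (∀ v ∉ K.verts, ψ v = 0) ∧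
    ∀ v ∈ (↑K.verts : Set ℕ) ∩ dom, ψ v = φ v}

/-- The hyperedges `E_i` associated to a core `C` and a component `D`. -/
def obstructionEdges (H : HGraph) (C D : Finset ℕ) : Finset (Finset ℕ) :=
  H.edges.filter fun e => e ⊆ C ∪ D ∧ 1 < e.card

/-- `H` is an `l`-obstruction (a member of `𝓗_l`). -/
def IsLObstruction (l : ℕ∞) (H : HGraph) : Prop :=
  ∃ k, 3 ≤ k ∧ ∃ C ⊆ H.verts, C.card = k ∧
    (∀ e ∈ (H.trim C l).edges, e.card ≤ 1) ∧
    (∀ D : Finset ℕ, (H.trim (H.verts \ C) ⊤).IsComponent D →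
      ¬ C ⊆ (obstructionEdges H C D).biUnion id) ∧
    ∃ Dmap : ℕ → Finset ℕ, Set.InjOn Dmap ↑C ∧
      ∀ c ∈ C, (H.trim (H.verts \ C) ⊤).IsComponent (Dmap c) ∧
        C.erase c ⊆ (obstructionEdges H C (Dmap c)).biUnion id ∧
        ∀ e ∈ obstructionEdges H C (Dmap c), c ∉ e

/-- `H` is `𝓗_l` ITS free: no induced ∞-trimmed subhypergraph is an `l`-obstruction. -/
def ITSFree (l : ℕ∞) (H : HGraph) : Prop :=
  ∀ S ⊆ H.verts, ¬ IsLObstruction l (H.trim S ⊤)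

/-- The hypergraph `(Hv, He)` is an `l`-connector of `X ⊆ Hv`. -/
def IsConnector (l : ℕ∞) (Hv : Finset ℕ) (He : Finset (Finset ℕ)) (X : Finset ℕ) : Prop :=
  X ⊆ Hv ∧ HGraph.Connected ⟨Hv, He⟩ ∧
    (∀ e ∈ He, 2 ≤ (e ∩ X).card → l < ((e \ X).card : ℕ∞)) ∧
    ∃ V' : Finset ℕ, (HGraph.trim ⟨Hv, He⟩ (Hv \ X) ⊤).IsComponent V' ∧
      ∀ xx ∈ X, ∃ v ∈ V', ∃ e ∈ He, xx ∈ e ∧ v ∈ e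

/-- Witness data for membership of `H` in `𝓗_{l,k}`. -/
def InHlkWitness (l : ℕ∞) (k : ℕ) (H : HGraph)
    (x : ℕ → ℕ) (Vp : ℕ → Finset ℕ) (Ep : ℕ → Finset (Finset ℕ)) : Prop :=
  Set.InjOn x ↑(Finset.range k) ∧
  (∀ i < k, ∀ j < k, i ≠ j → Disjoint (Vp i) (Vp j)) ∧
  (∀ i < k, Disjoint (Vp i) ((Finset.range k).image x)) ∧
  H.verts = (Finset.range k).image x ∪ (Finset.range k).biUnion Vp ∧
  (∀ i < k, ∀ j < k, i ≠ j → Disjoint (Ep i) (Ep j)) ∧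
  H.edges = (Finset.range k).biUnion Ep ∧
  ∀ i < k,
    (∀ e ∈ Ep i, e ⊆ Vp i ∪ (((Finset.range k).image x).erase (x i))) ∧
    IsConnector l (Vp i ∪ (((Finset.range k).image x).erase (x i))) (Ep i)
      (((Finset.range k).image x).erase (x i))

/-- `H ∈ 𝓗_{l,k}`. -/
def InHlk (l : ℕ∞) (k : ℕ) (H : HGraph) : Prop :=
  ∃ x Vp Ep, InHlkWitness l k H x Vp Ep

/-- The DAG `(V, Adj)` contains a `k`-reachable-cycle. -/
def HasReachCycle (V : Finset ℕ) (Adj : ℕ → ℕ → Prop) (k : ℕ) : Prop :=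
  ∃ x y : ZMod k → ℕ, Function.Injective x ∧ Function.Injective y ∧
    (∀ i, x i ∈ V) ∧ (∀ i, y i ∈ V) ∧
    (∀ i, x i ∈ Reach Adj (y i) ∧ x (i + 1) ∈ Reach Adj (y i)) ∧
    ∀ v ∈ V, 2 ≤ (Set.range x ∩ Reach Adj v).ncard →
      ∃ i, Set.range x ∩ Reach Adj v = {x i, x (i + 1)}

/-- `(x, y)` form a `k`-reachable-simplex in the DAG `(V, Adj)`. -/
def IsReachSimplexPair (V : Finset ℕ) (Adj : ℕ → ℕ → Prop) {k : ℕ}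
    (x y : Fin k → ℕ) : Prop :=
  Function.Injective x ∧ Function.Injective y ∧
    (∀ i, x i ∈ V) ∧ (∀ i, y i ∈ V) ∧
    (∀ i j, j ≠ i → x j ∈ Reach Adj (y i)) ∧
    ¬ ∃ v ∈ V, ∀ i, x i ∈ Reach Adj v

/-- The DAG `(V, Adj)` contains a `k`-reachable-simplex. -/
def HasReachSimplex (V : Finset ℕ) (Adj : ℕ → ℕ → Prop) (k : ℕ) : Prop :=
  ∃ x y : Fin k → ℕ, IsReachSimplexPair V Adj x y

/-- `F` is α-acyclic. -/
def IsAlphaAcyclic (F : HGraph) : Prop :=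
  ∃ (n : ℕ) (T : SimpleGraph (Fin n)) (f : Fin n → Finset ℕ),
    T.IsTree ∧ Function.Injective f ∧ (∀ i, f i ∈ F.edges) ∧
    (∀ e ∈ F.edges, ∃ i, f i = e) ∧
    ∀ i j b, OnPath T i j b → f i ∩ f j ⊆ f b

/-- The reachability hypergraph of the DAG `(V, Adj)`. -/
def reachHypergraph (V : Finset ℕ) (Adj : ℕ → ℕ → Prop) : HGraph :=
  ⟨V, (sourcesOf V Adj).image fun s => V.filter fun v => v ∈ Reach Adj s⟩

/-- The clique completion of a hypergraph. -/
def cliqueCompletion (H : HGraph) : SimpleGraph ℕ where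
  Adj u v := u ≠ v ∧ ∃ e ∈ H.edges, u ∈ e ∧ v ∈ e
  symm := by
    constructor
    intro u v h
    obtain ⟨huv, e, he, hu, hv⟩ := h
    exact ⟨huv.symm, e, he, hv, hu⟩
  loopless := by
    constructor
    intro u h
    exact h.1 rfl

/-- `G` has an induced cycle on `n` vertices. -/
def HasInducedCycle (G : SimpleGraph ℕ) (n : ℕ) : Prop :=
  ∃ f : ZMod n → ℕ, Function.Injective f ∧
    ∀ i j : ZMod n, G.Adj (f i) (f j) ↔ (j = i + 1 ∨ i = j + 1)

/-- The number of colorful homomorphisms from `H` to `G` under the coloring `c`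
(with color set `{1, …, |V(H)|}`). -/
def colHomCount (G H : HGraph) (c : ℕ → ℕ) : ℕ :=
  Set.ncard {f : ℕ → ℕ | IsHom H G f ∧ (∀ v ∉ H.verts, f v = 0) ∧
    Set.BijOn (fun v => c (f v)) ↑H.verts ↑(Finset.Icc 1 H.verts.card)}

/-- The tensor product of hypergraphs (vertex pairs encoded by `Nat.pair`). -/
def tensor (G H : HGraph) : HGraph :=
  ⟨(G.verts ×ˢ H.verts).image fun p => Nat.pair p.1 p.2,
    ((G.verts ×ˢ H.verts).image fun p => Nat.pair p.1 p.2).powerset.filter fun e =>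
      (e.image fun m => (Nat.unpair m).1) ∈ G.edges ∧
      (e.image fun m => (Nat.unpair m).2) ∈ H.edges⟩

/-- `Sub(G,H)`: the number of subhypergraphs of `G` isomorphic to `H`. -/
def subCount (G H : HGraph) : ℕ :=
  Set.ncard {p : Finset ℕ × Finset (Finset ℕ) |
    p.1 ⊆ G.verts ∧ (∀ e ∈ p.2, e ∈ G.edges ∧ e ⊆ p.1) ∧ Isomorphic H ⟨p.1, p.2⟩}

/-- Vertex renaming used in the construction of `G^H_l`:
core vertices go to the matching vertex of the colorful hyperedge `e` of `G`,
vertices of `H'` outside the core go to their fresh copy indexed by `e`, and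
vertices outside `H'` go to their unique copy. -/
def liftVert (S X : Finset ℕ) (π c : ℕ → ℕ) (e : Finset ℕ) (v : ℕ) : ℕ :=
  if v ∈ X then Nat.pair 0 ((e.filter fun u => c u = π v).sum id)
  else if v ∈ S then Nat.pair 2 (Nat.pair (Encodable.encode e) v)
  else Nat.pair 1 v

/-- The hypergraph `G^H_l` from the hardness construction. -/
def GHl (H G : HGraph) (S X : Finset ℕ) (Vp : ℕ → Finset ℕ) (π c : ℕ → ℕ)
    (k : ℕ) : HGraph :=
  ⟨(G.verts.image fun v => Nat.pair 0 v) ∪ ((H.verts \ S).image fun v => Nat.pair 1 v) ∪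
      (Finset.range k).biUnion fun i =>
        (G.edges.filter fun e => e.card = k - 1 ∧ e.image c = (Finset.range k).erase i).biUnion
          fun e => (Vp i).image fun v => Nat.pair 2 (Nat.pair (Encodable.encode e) v),
    ((H.edges.filter fun e => e ⊆ H.verts \ S).image fun e => e.image fun v => Nat.pair 1 v) ∪
      (Finset.range k).biUnion fun i =>
        (G.edges.filter fun e => e.card = k - 1 ∧ e.image c = (Finset.range k).erase i).biUnion
          fun e =>
            (H.edges.filter fun e' => ¬ e' ⊆ H.verts \ S ∧
                e' ⊆ X ∪ Vp i ∪ (H.verts \ S)).image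
              fun e' => e'.image (liftVert S X π c e)⟩

/-- The coloring of `G^H_l`. -/
def GHlColor (π c : ℕ → ℕ) (m : ℕ) : ℕ :=
  if (Nat.unpair m).1 = 0 then c (Nat.unpair m).2
  else if (Nat.unpair m).1 = 1 then π (Nat.unpair m).2
  else π (Nat.unpair (Nat.unpair m).2).2

/-- The grouping of the vertices of `G^H_l`: copied vertices first,
then the vertices of `G`, then the vertices of `V^ext`. -/
def GHlGroup (m : ℕ) : ℕ :=
  if (Nat.unpair m).1 = 2 then 0 else if (Nat.unpair m).1 = 0 then 1 else 2


def IsWalkFn (R : ℕ → ℕ → Prop) (q : ℕ → ℕ) (m : ℕ) : Prop := ∀ i < m, R (q i) (q (i+1))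

lemma rtg_symm_of {R : ℕ → ℕ → Prop} (hs : ∀ x y, R x y → R y x) {a b : ℕ}
    (h : Relation.ReflTransGen R a b) : Relation.ReflTransGen R b a := by
  induction h with
  | refl => exact .refl
  | tail _ hstep ih => exact Relation.ReflTransGen.trans (Relation.ReflTransGen.single (hs _ _ hstep)) ih

lemma walk_of_rtg {R : ℕ → ℕ → Prop} {u v : ℕ} (h : Relation.ReflTransGen R u v) :
    ∃ m q, q 0 = u ∧ q m = v ∧ IsWalkFn R q m := by
  induction h with
  | refl => exact ⟨0, fun _ => u, rfl, rfl, fun i hi => absurd hi (Nat.not_lt_zero i)⟩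
  | @tail b c _ hstep ih =>
    obtain ⟨m, q, h0, hm, hw⟩ := ih
    refine ⟨m + 1, fun i => if i = m + 1 then c else q i, by simp [h0], by simp, ?_⟩
    intro i hi
    rcases Nat.lt_or_ge i m with hlt | hge
    · have h1 : i ≠ m + 1 := by omega
      have h2 : i + 1 ≠ m + 1 := by omega
      simpa [h1, h2, show i ≠ m by omega] using hw i hlt
    · have : i = m := by omega
      subst this
      have h1 : i ≠ i + 1 := by omega
      simpa [h1, hm] using hstep

/-- minimal walk with its properties -/
lemma exists_min_walk {R : ℕ → ℕ → Prop} {b c : ℕ}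
    (hex : ∃ m q, q 0 = b ∧ q m = c ∧ IsWalkFn R q m) :
    ∃ m q, q 0 = b ∧ q m = c ∧ IsWalkFn R q m ∧
      (∀ i j, i ≤ m → j ≤ m → q i = q j → i = j) ∧
      (∀ i j, i + 1 < j → j ≤ m → ¬ R (q i) (q j)) := by
  have hex' : ∃ m, ∃ q, q 0 = b ∧ q m = c ∧ IsWalkFn R q m := by
    obtain ⟨m, q, h⟩ := hex; exact ⟨m, q, h⟩
  classical
  obtain ⟨q, h0, hm, hw⟩ : ∃ q, q 0 = b ∧ q (Nat.find hex') = c ∧ IsWalkFn R q (Nat.find hex') :=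
    Nat.find_spec hex'
  set m := Nat.find hex' with hmdef
  have hmin : ∀ m' < m, ¬ ∃ q, q 0 = b ∧ q m' = c ∧ IsWalkFn R q m' := fun m' h => Nat.find_min hex' h
  -- general splicing: given a "shortcut" from index i to index j (i+1 ≤ j, cost 1 if edge, 0 if equal),
  -- we derive contradictions
  have splice : ∀ i j d, i + d ≤ j → j ≤ m → (d = 0 → q i = q j) → (d = 1 → i + 1 ≤ j ∧ R (q i) (q j)) →
      (d ≤ 1) → j ≠ i + d → False := by
    intro i j d hle hjm hd0 hd1 hd hne
    have hlen : m - (j - (i + d)) < m := by omega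
    refine hmin _ hlen ⟨fun p => if p ≤ i then q p else q (p + (j - (i + d))), by simpa using h0, ?_, ?_⟩
    · dsimp only
      by_cases hni : m - (j - (i+d)) ≤ i
      · have hd' : d = 0 := by omega
        have hji : m - (j - (i+d)) = i ∧ j = m := by omega
        rw [if_pos hni, hji.1, hd0 hd', hji.2, hm]
      · rw [if_neg hni]
        have : m - (j - (i+d)) + (j - (i+d)) = m := by omega
        rw [this, hm]
    · intro p hp
      dsimp only
      by_cases h1 : p + 1 ≤ i
      · rw [if_pos (by omega : p ≤ i), if_pos h1]
        exact hw p (by omega)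
      · by_cases h2 : p ≤ i
        · -- p = i
          have hpi : p = i := by omega
          rw [if_pos h2, if_neg h1, hpi]
          have harith : i + 1 + (j - (i + d)) = j + 1 - d := by omega
          rw [harith]
          rcases Nat.le_one_iff_eq_zero_or_eq_one.mp hd with h | h
          · subst h
            have : j + 1 - 0 = j + 1 := by omega
            rw [this, hd0 rfl]
            exact hw j (by omega)
          · subst h
            have : j + 1 - 1 = j := by omega
            rw [this]
            exact (hd1 rfl).2
        · rw [if_neg h2, if_neg h1]
          have : p + 1 + (j - (i + d)) = (p + (j - (i+d))) + 1 := by omega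
          rw [this]
          exact hw (p + (j - (i+d))) (by omega)
  refine ⟨m, q, h0, hm, hw, ?_, ?_⟩
  · intro i j hi hj hij
    by_contra hne
    rcases Nat.lt_or_ge i j with hlt | hge
    · exact splice i j 0 (by omega) hj (fun _ => hij) (by omega) (by omega) (by omega)
    · exact splice j i 0 (by omega) hi (fun _ => hij.symm) (by omega) (by omega) (by omega)
  · intro i j hij hjm' hR
    exact splice i j 1 (by omega) hjm' (by omega) (fun _ => ⟨by omega, hR⟩) (by omega) (by omega)

/-- A minimal induced path from b to c through A. -/
lemma seg_lemma (G : SimpleGraph ℕ) (b c : ℕ) (A : Set ℕ)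
    (hbc : b ≠ c) (nbc : ¬ G.Adj b c) (hbA : b ∉ A) (hcA : c ∉ A)
    (ebA : ∃ u ∈ A, G.Adj b u) (ecA : ∃ u ∈ A, G.Adj c u)
    (connA : ∀ u ∈ A, ∀ v ∈ A, Relation.ReflTransGen (fun x y => G.Adj x y ∧ x ∈ A ∧ y ∈ A) u v) :
    ∃ (m : ℕ) (q : ℕ → ℕ), 2 ≤ m ∧ q 0 = b ∧ q m = c ∧ (∀ i < m, G.Adj (q i) (q (i+1))) ∧
      (∀ i, 0 < i → i < m → q i ∈ A) ∧
      (∀ i j, i ≤ m → j ≤ m → q i = q j → i = j) ∧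
      (∀ i j, i + 1 < j → j ≤ m → ¬ G.Adj (q i) (q j)) := by
  set R : ℕ → ℕ → Prop := fun x y => G.Adj x y ∧ (x ∈ A ∨ x = b ∨ x = c) ∧ (y ∈ A ∨ y = b ∨ y = c)
    with hR
  obtain ⟨u, huA, hbu⟩ := ebA
  obtain ⟨v, hvA, hcv⟩ := ecA
  have hrtg : Relation.ReflTransGen R b c := by
    have h1 : R b u := ⟨hbu, Or.inr (Or.inl rfl), Or.inl huA⟩
    have h2 : Relation.ReflTransGen R u v := by
      refine Relation.ReflTransGen.mono ?_ _ _ (connA u huA v hvA)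
      rintro x y ⟨h, hx, hy⟩
      exact ⟨h, Or.inl hx, Or.inl hy⟩
    have h3 : R v c := ⟨hcv.symm, Or.inl hvA, Or.inr (Or.inr rfl)⟩
    exact Relation.ReflTransGen.head h1 (h2.tail h3)
  obtain ⟨m, q, h0, hm, hw, hinj, hchord⟩ := exists_min_walk (walk_of_rtg hrtg)
  have hmem : ∀ i ≤ m, q i ∈ A ∨ q i = b ∨ q i = c := by
    intro i hi
    rcases Nat.eq_zero_or_pos i with h | h
    · subst h; rw [h0]; exact Or.inr (Or.inl rfl)
    · have := hw (i - 1) (by omega)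
      have e : i - 1 + 1 = i := by omega
      rw [e] at this
      exact this.2.2
  have hint : ∀ i, 0 < i → i < m → q i ∈ A := by
    intro i h1 h2
    rcases hmem i (by omega) with h | h | h
    · exact h
    · exact absurd (hinj i 0 (by omega) (by omega) (by rw [h0, h])) (by omega)
    · exact absurd (hinj i m (by omega) (le_refl m) (by rw [hm, h])) (by omega)
  have hm2 : 2 ≤ m := by
    rcases Nat.lt_or_ge m 2 with h | h
    · interval_cases m
      · exact absurd (h0 ▸ hm) hbc
      · exact absurd (h0 ▸ hm ▸ (hw 0 (by omega)).1) nbc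
    · exact h
  refine ⟨m, q, hm2, h0, hm, fun i hi => (hw i hi).1, hint, hinj, ?_⟩
  intro i j hij hjm hadj
  exact hchord i j hij hjm ⟨hadj, hmem i (by omega), hmem j hjm⟩

lemma glue_lemma (G : SimpleGraph ℕ) (a b c : ℕ) (A B C : Set ℕ)
    (hab : a ≠ b) (hac : a ≠ c) (hbc : b ≠ c)
    (haA : a ∉ A) (hbA : b ∉ A) (hcA : c ∉ A)
    (haB : a ∉ B) (hbB : b ∉ B) (hcB : c ∉ B)
    (haC : a ∉ C) (hbC : b ∉ C) (hcC : c ∉ C)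
    (dAB : ∀ u ∈ A, u ∉ B) (dAC : ∀ u ∈ A, u ∉ C) (dBC : ∀ u ∈ B, u ∉ C)
    (nab : ¬ G.Adj a b) (nac : ¬ G.Adj a c) (nbc : ¬ G.Adj b c)
    (naA : ∀ u ∈ A, ¬ G.Adj a u) (nbB : ∀ u ∈ B, ¬ G.Adj b u) (ncC : ∀ u ∈ C, ¬ G.Adj c u)
    (xAB : ∀ u ∈ A, ∀ v ∈ B, ¬ G.Adj u v) (xAC : ∀ u ∈ A, ∀ v ∈ C, ¬ G.Adj u v)
    (xBC : ∀ u ∈ B, ∀ v ∈ C, ¬ G.Adj u v)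
    (ebA : ∃ u ∈ A, G.Adj b u) (ecA : ∃ u ∈ A, G.Adj c u)
    (ecB : ∃ u ∈ B, G.Adj c u) (eaB : ∃ u ∈ B, G.Adj a u)
    (eaC : ∃ u ∈ C, G.Adj a u) (ebC : ∃ u ∈ C, G.Adj b u)
    (connA : ∀ u ∈ A, ∀ v ∈ A, Relation.ReflTransGen (fun x y => G.Adj x y ∧ x ∈ A ∧ y ∈ A) u v)
    (connB : ∀ u ∈ B, ∀ v ∈ B, Relation.ReflTransGen (fun x y => G.Adj x y ∧ x ∈ B ∧ y ∈ B) u v)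
    (connC : ∀ u ∈ C, ∀ v ∈ C, Relation.ReflTransGen (fun x y => G.Adj x y ∧ x ∈ C ∧ y ∈ C) u v) :
    ∃ n, 6 ≤ n ∧ HasInducedCycle G n := by
  obtain ⟨mA, qA, hmA, hA0, hAm, stepA, intA, injA, chordA⟩ :=
    seg_lemma G b c A hbc nbc hbA hcA ebA ecA connA
  obtain ⟨mB, qB, hmB, hB0, hBm, stepB, intB, injB, chordB⟩ :=
    seg_lemma G c a B (Ne.symm hac) (fun h => nac h.symm) hcB haB ecB eaB connB
  obtain ⟨mC, qC, hmC, hC0, hCm, stepC, intC, injC, chordC⟩ :=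
    seg_lemma G a b C hab nab haC hbC eaC ebC connC
  set n := mA + mB + mC with hn
  have hn6 : 6 ≤ n := by omega
  set F : ℕ → ℕ := fun p => if p < mA then qA p else if p < mA + mB then qB (p - mA)
    else qC (p - mA - mB) with hF
  have hF1 : ∀ p, p ≤ mA → F p = qA p := by
    intro p hp
    rcases Nat.lt_or_ge p mA with h | h
    · simp only [hF, if_pos h]
    · have hpm : p = mA := by omega
      rw [hpm]
      simp only [hF, if_neg (lt_irrefl mA), if_pos (by omega : mA < mA + mB)]
      rw [(by omega : mA - mA = 0), hB0, hAm]
  have hF2 : ∀ p, mA ≤ p → p ≤ mA + mB → F p = qB (p - mA) := by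
    intro p h1 h2
    rcases Nat.lt_or_ge p (mA + mB) with h | h
    · simp only [hF, if_neg (by omega : ¬ p < mA), if_pos h]
    · have hpm : p = mA + mB := by omega
      rw [hpm]
      simp only [hF, if_neg (by omega : ¬ mA + mB < mA), if_neg (lt_irrefl (mA + mB))]
      rw [(by omega : mA + mB - mA - mB = 0), hC0, (by omega : mA + mB - mA = mB), hBm]
  have hF3 : ∀ p, mA + mB ≤ p → F p = qC (p - mA - mB) := by
    intro p h1
    simp only [hF, if_neg (by omega : ¬ p < mA), if_neg (by omega : ¬ p < mA + mB)]
  -- categorize the values of F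
  have catA : ∀ p, 0 < p → p < mA → F p ∈ A := fun p h1 h2 => by
    rw [hF1 p (by omega)]; exact intA p h1 h2
  have catB : ∀ p, mA < p → p < mA + mB → F p ∈ B := fun p h1 h2 => by
    rw [hF2 p (by omega) (by omega)]; exact intB (p - mA) (by omega) (by omega)
  have catC : ∀ p, mA + mB < p → p < n → F p ∈ C := fun p h1 h2 => by
    rw [hF3 p (by omega)]; exact intC (p - mA - mB) (by omega) (by omega)
  have catb : F 0 = b := by rw [hF1 0 (by omega)]; exact hA0
  have catc : F mA = c := by rw [hF1 mA (le_refl mA)]; exact hAm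
  have cata : F (mA + mB) = a := by
    rw [hF2 (mA + mB) (by omega) (le_refl _), (by omega : mA + mB - mA = mB)]; exact hBm
  -- injectivity of F on [0, n)
  have hFinj : ∀ p r, p ≤ r → r < n → F p = F r → p = r := by
    intro p r hpr hrn heq
    by_cases c1 : r ≤ mA
    · rw [hF1 p (by omega), hF1 r c1] at heq
      exact injA p r (by omega) c1 heq
    · by_cases c2 : mA + mB ≤ p
      · rw [hF3 p c2, hF3 r (by omega)] at heq
        have := injC (p - mA - mB) (r - mA - mB) (by omega) (by omega) heq
        omega
      · by_cases c3 : mA ≤ p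
        · by_cases c4 : r ≤ mA + mB
          · rw [hF2 p c3 (by omega), hF2 r (by omega) c4] at heq
            have := injB (p - mA) (r - mA) (by omega) (by omega) heq
            omega
          · -- p ∈ [mA, mA+mB), r > mA+mB : c/B vs C
            exfalso
            have hrC : F r ∈ C := catC r (by omega) hrn
            rcases Nat.eq_or_lt_of_le c3 with h | h
            · rw [← h, catc] at heq; exact hcC (heq ▸ hrC)
            · exact dBC _ (catB p h (by omega)) (heq ▸ hrC)
        · -- p < mA, r > mA
          exfalso
          push_neg at c1 c3
          rcases Nat.eq_zero_or_pos p with hp0 | hp0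
          · rw [hp0, catb] at heq
            by_cases c4 : r < mA + mB
            · exact hbB (heq ▸ catB r c1 c4)
            · rcases Nat.eq_or_lt_of_le (by omega : mA + mB ≤ r) with h | h
              · rw [← h, cata] at heq; exact hab heq.symm
              · exact hbC (heq ▸ catC r h hrn)
          · have hpA : F p ∈ A := catA p hp0 c3
            by_cases c4 : r < mA + mB
            · exact dAB _ hpA (heq ▸ catB r c1 c4)
            · rcases Nat.eq_or_lt_of_le (by omega : mA + mB ≤ r) with h | h
              · rw [← h, cata] at heq; exact haA (heq ▸ hpA)
              · exact dAC _ hpA (heq ▸ catC r h hrn)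
  -- chord-freeness of F on the cycle
  have key : ∀ p r, p + 2 ≤ r → r < n → ¬ (p = 0 ∧ r = n - 1) → ¬ G.Adj (F p) (F r) := by
    intro p r hpr hrn hne hadj
    by_cases c1 : r ≤ mA
    · rw [hF1 p (by omega), hF1 r c1] at hadj
      exact chordA p r (by omega) c1 hadj
    · by_cases c2 : mA + mB ≤ p
      · rw [hF3 p c2, hF3 r (by omega)] at hadj
        exact chordC (p - mA - mB) (r - mA - mB) (by omega) (by omega) hadj
      · by_cases c3 : mA ≤ p
        · by_cases c4 : r ≤ mA + mB
          · rw [hF2 p c3 (by omega), hF2 r (by omega) c4] at hadj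
            exact chordB (p - mA) (r - mA) (by omega) (by omega) hadj
          · -- p ∈ [mA, mA+mB), r ∈ (mA+mB, n) : {c}∪B vs C
            have hrC : F r ∈ C := catC r (by omega) hrn
            rcases Nat.eq_or_lt_of_le c3 with h | h
            · rw [← h, catc] at hadj
              exact ncC _ hrC hadj
            · exact xBC _ (catB p h (by omega)) _ hrC hadj
        · -- p < mA, r > mA
          push_neg at c1 c3
          rcases Nat.eq_zero_or_pos p with hp0 | hp0
          · rw [hp0, catb] at hadj
            by_cases c4 : r < mA + mB
            · exact nbB _ (catB r c1 c4) hadj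
            · rcases Nat.eq_or_lt_of_le (by omega : mA + mB ≤ r) with h | h
              · rw [← h, cata] at hadj; exact nab hadj.symm
              · -- b vs interior of walk C : use chordC with endpoint mC
                have hrlt : r < n - 1 := by
                  rcases Nat.lt_or_ge r (n-1) with h' | h'
                  · exact h'
                  · exact absurd ⟨hp0, by omega⟩ hne
                rw [hF3 r (by omega)] at hadj
                have := chordC (r - mA - mB) mC (by omega) (le_refl mC)
                rw [hCm] at this
                exact this hadj.symm
          · have hpA : F p ∈ A := catA p hp0 c3
            by_cases c4 : r < mA + mB
            · exact xAB _ hpA _ (catB r c1 c4) hadj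
            · rcases Nat.eq_or_lt_of_le (by omega : mA + mB ≤ r) with h | h
              · rw [← h, cata] at hadj; exact naA _ hpA hadj.symm
              · exact xAC _ hpA _ (catC r h hrn) hadj
  -- consecutive adjacency
  have adjkey : ∀ p, p + 1 < n → G.Adj (F p) (F (p + 1)) := by
    intro p hp
    by_cases c1 : p + 1 ≤ mA
    · rw [hF1 p (by omega), hF1 (p+1) c1]
      exact stepA p (by omega)
    · by_cases c2 : p + 1 ≤ mA + mB
      · rw [hF2 p (by omega) (by omega), hF2 (p+1) (by omega) c2,
          (by omega : p + 1 - mA = (p - mA) + 1)]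
        exact stepB (p - mA) (by omega)
      · rw [hF3 p (by omega), hF3 (p+1) (by omega),
          (by omega : p + 1 - mA - mB = (p - mA - mB) + 1)]
        exact stepC (p - mA - mB) (by omega)
  have wrap : G.Adj (F (n - 1)) (F 0) := by
    rw [catb, hF3 (n-1) (by omega)]
    have := stepC (mC - 1) (by omega)
    rw [(by omega : mC - 1 + 1 = mC), hCm] at this
    rw [(by omega : n - 1 - mA - mB = mC - 1)]
    exact this
  -- assemble the induced cycle
  haveI : NeZero n := ⟨by omega⟩
  haveI : Fact (1 < n) := ⟨by omega⟩
  refine ⟨n, hn6, fun i => F i.val, ?_, ?_⟩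
  · intro i j hij
    have hi := ZMod.val_lt i
    have hj := ZMod.val_lt j
    have : i.val = j.val := by
      rcases Nat.lt_trichotomy i.val j.val with h | h | h
      · exact hFinj _ _ (by omega) hj hij
      · exact h
      · exact (hFinj _ _ (by omega) hi hij.symm).symm
    exact ZMod.val_injective n this
  · intro i j
    have hi := ZMod.val_lt i
    have hj := ZMod.val_lt j
    have hsucc : ∀ u v : ZMod n, (v = u + 1) ↔ (v.val = u.val + 1 ∨ (u.val = n - 1 ∧ v.val = 0)) := by
      intro u v
      have huv1 := ZMod.val_lt u
      have huv2 := ZMod.val_lt v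
      have hv1 : (u + 1).val = (u.val + 1) % n := by
        rw [ZMod.val_add, ZMod.val_one]
      constructor
      · intro h
        rw [h, hv1]
        have := ZMod.val_lt u
        rcases Nat.lt_or_ge (u.val + 1) n with h' | h'
        · left; exact Nat.mod_eq_of_lt h'
        · right
          constructor
          · omega
          · have : u.val + 1 = n := by omega
            rw [this, Nat.mod_self]
      · intro h
        have : v.val = (u + 1).val := by
          rw [hv1]
          rcases h with ⟨h1⟩ | ⟨h1, h2⟩
          · rw [h1, Nat.mod_eq_of_lt (by omega)]
          · rw [h1, h2, (by omega : n - 1 + 1 = n), Nat.mod_self]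
        exact ZMod.val_injective n this
    show G.Adj (F i.val) (F j.val) ↔ (j = i + 1 ∨ i = j + 1)
    constructor
    · intro hadj
      by_contra hno
      rw [not_or, hsucc i j, hsucc j i] at hno
      obtain ⟨hno1, hno2⟩ := hno
      push_neg at hno1 hno2
      rcases Nat.lt_trichotomy i.val j.val with h | h | h
      · refine key i.val j.val ?_ hj ?_ hadj
        · have h1 := hno1.1; omega
        · rintro ⟨h1, h2⟩
          exact (hno2.2 h2) h1
      · rw [h] at hadj
        exact (G.loopless.irrefl _) hadj
      · refine key j.val i.val ?_ hi ?_ hadj.symm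
        · have h1 := hno2.1; omega
        · rintro ⟨h1, h2⟩
          exact (hno1.2 h2) h1
    · intro h
      rcases h with h | h
      · rw [hsucc i j] at h
        rcases h with h | ⟨h1, h2⟩
        · rw [h]; exact adjkey i.val (by omega)
        · rw [h1, h2]; exact wrap
      · rw [hsucc j i] at h
        rcases h with h | ⟨h1, h2⟩
        · rw [h]; exact (adjkey j.val (by omega)).symm
        · rw [h1, h2]; exact wrap.symm



lemma dirB (H : HGraph) (hH : H.Good) (S : Finset ℕ) (hS : S ⊆ H.verts)
    (hobs : IsLObstruction ⊤ (H.trim S ⊤)) :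
    ∃ n, 6 ≤ n ∧ HasInducedCycle (cliqueCompletion H) n := by
  obtain ⟨k, hk3, C, hCsub, hCcard, hcond1, hcond2, Dmap, hDinj, hDprop⟩ := hobs
  set H' := H.trim S ⊤ with hH'def
  set G := cliqueCompletion H with hGdef
  have hvertsS : H'.verts = H.verts ∩ S := rfl
  have hCS : C ⊆ S := fun x hx => (Finset.mem_inter.mp (hCsub hx)).2
  -- edges of H'
  have h'edge : ∀ e' ∈ H'.edges, ∃ e₀ ∈ H.edges, e' = e₀ ∩ S := by
    intro e' he'
    obtain ⟨e₀, he₀, rfl⟩ := Finset.mem_image.mp he'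
    exact ⟨e₀, (Finset.mem_filter.mp he₀).1, rfl⟩
  have h'edge_in : ∀ e₀ ∈ H.edges, (e₀ ∩ S).Nonempty → e₀ ∩ S ∈ H'.edges := by
    intro e₀ he₀ hne
    exact Finset.mem_image.mpr ⟨e₀, Finset.mem_filter.mpr ⟨he₀, le_top, hne⟩, rfl⟩
  have h'edge_sub : ∀ e' ∈ H'.edges, e' ⊆ H'.verts := by
    intro e' he' x hx
    obtain ⟨e₀, he₀, rfl⟩ := h'edge e' he'
    rw [hvertsS]
    exact Finset.mem_inter.mpr ⟨(hH e₀ he₀).1 (Finset.mem_inter.mp hx).1,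
      (Finset.mem_inter.mp hx).2⟩
  -- condition (1) in usable form
  have cond1' : ∀ e' ∈ H'.edges, ∀ u, u ∈ e' → u ∈ C → ∀ v, v ∈ e' → v ∈ C → u = v := by
    intro e' he' u hu huC v hv hvC
    have hmem : e' ∩ C ∈ (H'.trim C ⊤).edges :=
      Finset.mem_image.mpr ⟨e', Finset.mem_filter.mpr ⟨he', le_top, ⟨u, Finset.mem_inter.mpr ⟨hu, huC⟩⟩⟩, rfl⟩
    have hcard := hcond1 _ hmem
    exact Finset.card_le_one.mp hcard u (Finset.mem_inter.mpr ⟨hu, huC⟩) v (Finset.mem_inter.mpr ⟨hv, hvC⟩)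
  -- the trimmed hypergraph on the complement of the core
  set W : Finset ℕ := H'.verts \ C with hWdef
  set Ht := H'.trim (H'.verts \ C) ⊤ with hHt
  have hWverts : Ht.verts = W := by
    show H'.verts ∩ (H'.verts \ C) = W
    exact Finset.inter_eq_right.mpr Finset.sdiff_subset
  set adjT := Ht.Adj with hadjT
  have t1 : ∀ u v, adjT u v → u ∈ W ∧ v ∈ W ∧ ∃ e' ∈ H'.edges, u ∈ e' ∧ v ∈ e' := by
    rintro u v ⟨e, he, hu, hv⟩
    obtain ⟨e', he', rfl⟩ := Finset.mem_image.mp he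
    have he'' := (Finset.mem_filter.mp he').1
    exact ⟨(Finset.mem_inter.mp hu).2, (Finset.mem_inter.mp hv).2,
      e', he'', (Finset.mem_inter.mp hu).1, (Finset.mem_inter.mp hv).1⟩
  have t5 : ∀ u v e', e' ∈ H'.edges → u ∈ e' → v ∈ e' → u ∈ W → v ∈ W → adjT u v := by
    intro u v e' he' hu hv huW hvW
    refine ⟨e' ∩ (H'.verts \ C), ?_, Finset.mem_inter.mpr ⟨hu, huW⟩, Finset.mem_inter.mpr ⟨hv, hvW⟩⟩
    exact Finset.mem_image.mpr ⟨e', Finset.mem_filter.mpr ⟨he', le_top, ⟨u, Finset.mem_inter.mpr ⟨hu, huW⟩⟩⟩, rfl⟩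
  have hsymmT : ∀ x y, adjT x y → adjT y x := by
    rintro x y ⟨e, he, hx, hy⟩; exact ⟨e, he, hy, hx⟩
  have comp_spec : ∀ D, Ht.IsComponent D →
      ∃ v₀ ∈ W, D = W.filter (fun u => Relation.ReflTransGen adjT v₀ u) := by
    rintro D ⟨v₀, hv₀, rfl⟩
    rw [hWverts] at hv₀ ⊢
    exact ⟨v₀, hv₀, rfl⟩
  have comp_sub : ∀ D, Ht.IsComponent D → D ⊆ W := by
    intro D hD
    obtain ⟨v₀, _, rfl⟩ := comp_spec D hD
    exact Finset.filter_subset _ _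
  have comp_closed : ∀ D, Ht.IsComponent D → ∀ u ∈ D, ∀ y, adjT u y → y ∈ D := by
    intro D hD u hu y huy
    obtain ⟨v₀, hv₀, rfl⟩ := comp_spec D hD
    have h1 := Finset.mem_filter.mp hu
    exact Finset.mem_filter.mpr ⟨(t1 u y huy).2.1, h1.2.tail huy⟩
  have comp_eq : ∀ D D', Ht.IsComponent D → Ht.IsComponent D' → ∀ u, u ∈ D → u ∈ D' → D = D' := by
    intro D D' hD hD' u hu hu'
    obtain ⟨v₀, hv₀, rfl⟩ := comp_spec D hD
    obtain ⟨v₁, hv₁, rfl⟩ := comp_spec D' hD'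
    have h0 : Relation.ReflTransGen adjT v₀ u := (Finset.mem_filter.mp hu).2
    have h1 : Relation.ReflTransGen adjT v₁ u := (Finset.mem_filter.mp hu').2
    ext x
    simp only [Finset.mem_filter]
    constructor
    · rintro ⟨hxW, hx⟩
      exact ⟨hxW, (h1.trans (rtg_symm_of hsymmT h0)).trans hx⟩
    · rintro ⟨hxW, hx⟩
      exact ⟨hxW, (h0.trans (rtg_symm_of hsymmT h1)).trans hx⟩
  -- ambient adjacency from shared H'-edge
  have adj_of_edge : ∀ u v e', e' ∈ H'.edges → u ∈ e' → v ∈ e' → u ≠ v → G.Adj u v := by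
    intro u v e' he' hu hv hne
    obtain ⟨e₀, he₀, rfl⟩ := h'edge e' he'
    exact ⟨hne, e₀, he₀, (Finset.mem_inter.mp hu).1, (Finset.mem_inter.mp hv).1⟩
  -- ambient adjacency between points of S gives a shared H'-edge
  have edge_of_adj : ∀ u v, u ∈ S → v ∈ S → G.Adj u v → ∃ e' ∈ H'.edges, u ∈ e' ∧ v ∈ e' := by
    rintro u v huS hvS ⟨hne, e₀, he₀, hu, hv⟩
    exact ⟨e₀ ∩ S, h'edge_in e₀ he₀ ⟨u, Finset.mem_inter.mpr ⟨hu, huS⟩⟩,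
      Finset.mem_inter.mpr ⟨hu, huS⟩, Finset.mem_inter.mpr ⟨hv, hvS⟩⟩
  have hWS : W ⊆ S := fun x hx => (Finset.mem_inter.mp (Finset.mem_sdiff.mp hx).1).2
  -- the core is independent
  have core_indep : ∀ u ∈ C, ∀ v ∈ C, u ≠ v → ¬ G.Adj u v := by
    intro u hu v hv hne hadj
    obtain ⟨e', he', hue, hve⟩ := edge_of_adj u v (hCS hu) (hCS hv) hadj
    exact hne (cond1' e' he' u hue hu v hve hv)
  -- a core vertex has no neighbour in its associated component
  have no_nb : ∀ c' ∈ C, ∀ d ∈ Dmap c', ¬ G.Adj c' d := by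
    intro c' hc' d hd hadj
    obtain ⟨hDcomp, hDcov, hDnoc⟩ := hDprop c' hc'
    have hdW : d ∈ W := comp_sub _ hDcomp hd
    obtain ⟨e', he', hce, hde⟩ := edge_of_adj c' d (hCS hc') (hWS hdW) hadj
    have hsub : e' ⊆ C ∪ Dmap c' := by
      intro z hz
      by_cases hzC : z ∈ C
      · exact Finset.mem_union_left _ hzC
      · have hzW : z ∈ W := Finset.mem_sdiff.mpr ⟨h'edge_sub e' he' hz, hzC⟩
        exact Finset.mem_union_right _ (comp_closed _ hDcomp d hd z (t5 d z e' he' hde hz hdW hzW))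
    have hcard : 1 < e'.card := Finset.one_lt_card.mpr ⟨c', hce, d, hde, hadj.ne⟩
    exact hDnoc e' (Finset.mem_filter.mpr ⟨he', hsub, hcard⟩) hce
  -- every other core vertex has a neighbour in the component
  have cov_nb : ∀ c' ∈ C, ∀ b' ∈ C, b' ≠ c' → ∃ d ∈ Dmap c', G.Adj b' d := by
    intro c' hc' b' hb' hne
    obtain ⟨hDcomp, hDcov, hDnoc⟩ := hDprop c' hc'
    have : b' ∈ (obstructionEdges H' C (Dmap c')).biUnion id :=
      hDcov (Finset.mem_erase.mpr ⟨hne, hb'⟩)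
    obtain ⟨e, he, hbe⟩ := Finset.mem_biUnion.mp this
    have he' := Finset.mem_filter.mp he
    obtain ⟨y, hy, hyne⟩ := Finset.exists_mem_ne he'.2.2 b'
    have hyD : y ∈ Dmap c' := by
      rcases Finset.mem_union.mp (he'.2.1 hy) with h | h
      · exact absurd (cond1' e he'.1 y hy h b' (by exact hbe) hb') hyne
      · exact h
    exact ⟨y, hyD, adj_of_edge b' y e he'.1 hbe hy hyne.symm⟩
  -- no ambient edges between distinct components
  have cross : ∀ D D', Ht.IsComponent D → Ht.IsComponent D' → D ≠ D' →
      ∀ u ∈ D, ∀ v ∈ D', ¬ G.Adj u v := by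
    intro D D' hD hD' hne u hu v hv hadj
    have huW := comp_sub _ hD hu
    have hvW := comp_sub _ hD' hv
    obtain ⟨e', he', hue, hve⟩ := edge_of_adj u v (hWS huW) (hWS hvW) hadj
    have : v ∈ D := comp_closed _ hD u hu v (t5 u v e' he' hue hve huW hvW)
    exact hne (comp_eq D D' hD hD' v this hv)
  -- connectivity inside a component via ambient adjacency
  have conn : ∀ D, Ht.IsComponent D → ∀ u ∈ D, ∀ v ∈ D,
      Relation.ReflTransGen (fun x y => G.Adj x y ∧ x ∈ (↑D : Set ℕ) ∧ y ∈ (↑D : Set ℕ)) u v := by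
    intro D hD u hu v hv
    obtain ⟨v₀, hv₀, hDeq⟩ := comp_spec D hD
    set R : ℕ → ℕ → Prop := fun x y => G.Adj x y ∧ x ∈ (↑D : Set ℕ) ∧ y ∈ (↑D : Set ℕ) with hRdef
    have aux : ∀ w, Relation.ReflTransGen adjT v₀ w → Relation.ReflTransGen R v₀ w := by
      intro w hw
      induction hw with
      | refl => exact .refl
      | @tail x y hxy hstep ih =>
        have hxW : x ∈ W := (t1 x y hstep).1
        have hyW : y ∈ W := (t1 x y hstep).2.1
        have hxD : x ∈ D := by rw [hDeq]; exact Finset.mem_filter.mpr ⟨hxW, hxy⟩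
        have hyD : y ∈ D := by rw [hDeq]; exact Finset.mem_filter.mpr ⟨hyW, hxy.tail hstep⟩
        by_cases hxy' : x = y
        · rw [← hxy']; exact ih
        · obtain ⟨-, -, e', he', hxe, hye⟩ := t1 x y hstep
          exact ih.tail ⟨adj_of_edge x y e' he' hxe hye hxy', hxD, hyD⟩
    have hRsymm : ∀ x y, R x y → R y x := by
      rintro x y ⟨h1, h2, h3⟩; exact ⟨h1.symm, h3, h2⟩
    have h1 : Relation.ReflTransGen adjT v₀ u := by
      rw [hDeq] at hu; exact (Finset.mem_filter.mp hu).2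
    have h2 : Relation.ReflTransGen adjT v₀ v := by
      rw [hDeq] at hv; exact (Finset.mem_filter.mp hv).2
    exact (rtg_symm_of hRsymm (aux u h1)).trans (aux v h2)
  -- pick three distinct core vertices
  obtain ⟨a, ha⟩ := Finset.card_pos.mp (by omega : 0 < C.card)
  obtain ⟨b, hb'⟩ : (C.erase a).Nonempty :=
    Finset.card_pos.mp (by rw [Finset.card_erase_of_mem ha]; omega)
  have hb : b ∈ C := Finset.mem_of_mem_erase hb'
  have hba : b ≠ a := Finset.ne_of_mem_erase hb'
  obtain ⟨c, hc'⟩ : ((C.erase a).erase b).Nonempty := by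
    refine Finset.card_pos.mp ?_
    rw [Finset.card_erase_of_mem hb', Finset.card_erase_of_mem ha]
    omega
  have hc : c ∈ C := Finset.mem_of_mem_erase (Finset.mem_of_mem_erase hc')
  have hcb : c ≠ b := Finset.ne_of_mem_erase hc'
  have hca : c ≠ a := Finset.ne_of_mem_erase (Finset.mem_of_mem_erase hc')
  -- the three components
  have hcompa := (hDprop a ha).1
  have hcompb := (hDprop b hb).1
  have hcompc := (hDprop c hc).1
  have hDab : Dmap a ≠ Dmap b := fun h => hba.symm (hDinj ha hb h)
  have hDac : Dmap a ≠ Dmap c := fun h => hca.symm (hDinj ha hc h)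
  have hDbc : Dmap b ≠ Dmap c := fun h => hcb.symm (hDinj hb hc h)
  have hcore_notin : ∀ x ∈ C, ∀ D, Ht.IsComponent D → x ∉ D := by
    intro x hx D hD hxD
    exact (Finset.mem_sdiff.mp (comp_sub D hD hxD)).2 hx
  have hdisj : ∀ D D', Ht.IsComponent D → Ht.IsComponent D' → D ≠ D' → ∀ u ∈ D, u ∉ D' := by
    intro D D' hD hD' hne u hu hu'
    exact hne (comp_eq D D' hD hD' u hu hu')
  obtain ⟨n, hn6, hcyc⟩ := glue_lemma G a b c (↑(Dmap a)) (↑(Dmap b)) (↑(Dmap c))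
    (fun h => hba (h.symm)) (fun h => hca (h.symm)) (fun h => hcb (h.symm))
    (hcore_notin a ha _ hcompa) (hcore_notin b hb _ hcompa) (hcore_notin c hc _ hcompa)
    (hcore_notin a ha _ hcompb) (hcore_notin b hb _ hcompb) (hcore_notin c hc _ hcompb)
    (hcore_notin a ha _ hcompc) (hcore_notin b hb _ hcompc) (hcore_notin c hc _ hcompc)
    (fun u hu => hdisj _ _ hcompa hcompb hDab u hu)
    (fun u hu => hdisj _ _ hcompa hcompc hDac u hu)
    (fun u hu => hdisj _ _ hcompb hcompc hDbc u hu)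
    (core_indep a ha b hb (fun h => hba h.symm))
    (core_indep a ha c hc (fun h => hca h.symm))
    (core_indep b hb c hc (fun h => hcb h.symm))
    (fun u hu => no_nb a ha u hu)
    (fun u hu => no_nb b hb u hu)
    (fun u hu => no_nb c hc u hu)
    (fun u hu v hv => cross _ _ hcompa hcompb hDab u hu v hv)
    (fun u hu v hv => cross _ _ hcompa hcompc hDac u hu v hv)
    (fun u hu v hv => cross _ _ hcompb hcompc hDbc u hu v hv)
    (cov_nb a ha b hb hba) (cov_nb a ha c hc hca)
    (cov_nb b hb c hc hcb) (cov_nb b hb a ha (fun h => hba h.symm))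
    (cov_nb c hc a ha (fun h => hca h.symm)) (cov_nb c hc b hb (fun h => hcb h.symm))
    (fun u hu v hv => conn _ hcompa u hu v hv)
    (fun u hu v hv => conn _ hcompb u hu v hv)
    (fun u hu v hv => conn _ hcompc u hu v hv)
  exact ⟨n, hn6, hcyc⟩



lemma dirA (H : HGraph) (hH : H.Good) (n : ℕ) (hn : 6 ≤ n)
    (hcyc : HasInducedCycle (cliqueCompletion H) n) :
    ∃ S ⊆ H.verts, IsLObstruction ⊤ (H.trim S ⊤) := by
  obtain ⟨f, hfinj, hfadj⟩ := hcyc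
  haveI : NeZero n := ⟨by omega⟩
  set G := cliqueCompletion H with hGdef
  set x : ℕ → ℕ := fun p => f ((p : ℕ) : ZMod n) with hxdef
  have hxinj : ∀ p q, p < n → q < n → x p = x q → p = q := by
    intro p q hp hq h
    have := hfinj h
    calc p = ((p : ℕ) : ZMod n).val := (ZMod.val_natCast_of_lt hp).symm
    _ = ((q : ℕ) : ZMod n).val := by rw [this]
    _ = q := ZMod.val_natCast_of_lt hq
  have hmod : ∀ p q : ℕ, p < n → q < n →
      (((q : ℕ) : ZMod n) = ((p : ℕ) : ZMod n) + 1 ↔ (q = p + 1 ∨ (q = 0 ∧ p = n - 1))) := by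
    intro p q hp hq
    rw [show ((p : ℕ) : ZMod n) + 1 = ((p + 1 : ℕ) : ZMod n) by push_cast; ring]
    rw [ZMod.natCast_eq_natCast_iff', Nat.mod_eq_of_lt hq]
    rcases Nat.lt_or_ge (p + 1) n with h | h
    · rw [Nat.mod_eq_of_lt h]
      constructor
      · intro h'; left; exact h'
      · intro h'; rcases h' with h' | ⟨h1, h2⟩
        · exact h'
        · omega
    · have hpn : p + 1 = n := by omega
      rw [hpn, Nat.mod_self]
      constructor
      · intro h'; right; omega
      · intro h'; omega
  have hxadj : ∀ p q, p < n → q < n → (G.Adj (x p) (x q) ↔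
      ((q = p + 1 ∨ (q = 0 ∧ p = n - 1)) ∨ (p = q + 1 ∨ (p = 0 ∧ q = n - 1)))) := by
    intro p q hp hq
    rw [hxdef]
    rw [hfadj ((p : ℕ) : ZMod n) ((q : ℕ) : ZMod n)]
    rw [hmod p q hp hq, hmod q p hq hp]
  set S : Finset ℕ := (Finset.range n).image x with hSdef
  have hSmem : ∀ y, y ∈ S ↔ ∃ p, p < n ∧ x p = y := by
    intro y
    simp only [hSdef, Finset.mem_image, Finset.mem_range]
  have hxS : ∀ p, p < n → x p ∈ S := fun p hp => (hSmem (x p)).mpr ⟨p, hp, rfl⟩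
  have hadj_next : ∀ p, p < n → G.Adj (x p) (x ((p + 1) % n)) := by
    intro p hp
    rw [hxadj p ((p+1) % n) hp (Nat.mod_lt _ (by omega))]
    rcases Nat.lt_or_ge (p + 1) n with h | h
    · rw [Nat.mod_eq_of_lt h]; left; left; rfl
    · have hpn : p + 1 = n := by omega
      rw [hpn, Nat.mod_self]; left; right; omega
  have hSsub : S ⊆ H.verts := by
    intro y hy
    obtain ⟨p, hp, rfl⟩ := (hSmem y).mp hy
    obtain ⟨-, e₀, he₀, h1, -⟩ := hadj_next p hp
    exact (hH e₀ he₀).1 h1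
  refine ⟨S, hSsub, ?_⟩
  set H' := H.trim S ⊤ with hH'def
  have hvS : H'.verts = S := Finset.inter_eq_right.mpr hSsub
  have h'edge : ∀ e' ∈ H'.edges, ∃ e₀ ∈ H.edges, e' = e₀ ∩ S := by
    intro e' he'
    obtain ⟨e₀, he₀, rfl⟩ := Finset.mem_image.mp he'
    exact ⟨e₀, (Finset.mem_filter.mp he₀).1, rfl⟩
  have h'edge_in : ∀ e₀ ∈ H.edges, (e₀ ∩ S).Nonempty → e₀ ∩ S ∈ H'.edges := by
    intro e₀ he₀ hne
    exact Finset.mem_image.mpr ⟨e₀, Finset.mem_filter.mpr ⟨he₀, le_top, hne⟩, rfl⟩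
  have h'edge_subS : ∀ e' ∈ H'.edges, e' ⊆ S := by
    intro e' he' z hz
    obtain ⟨e₀, he₀, rfl⟩ := h'edge e' he'
    exact (Finset.mem_inter.mp hz).2
  have hedge_adj : ∀ e' ∈ H'.edges, ∀ u ∈ e', ∀ v ∈ e', u ≠ v → G.Adj u v := by
    intro e' he' u hu v hv hne
    obtain ⟨e₀, he₀, rfl⟩ := h'edge e' he'
    exact ⟨hne, e₀, he₀, (Finset.mem_inter.mp hu).1, (Finset.mem_inter.mp hv).1⟩
  -- consecutive pair edges
  have hpair : ∀ p, p < n → ({x p, x ((p + 1) % n)} : Finset ℕ) ∈ H'.edges := by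
    intro p hp
    have hq : (p + 1) % n < n := Nat.mod_lt _ (by omega)
    obtain ⟨hne, e₀, he₀, h1, h2⟩ := hadj_next p hp
    have hxpS := hxS p hp
    have hxqS := hxS _ hq
    have hmem : e₀ ∩ S ∈ H'.edges := h'edge_in e₀ he₀ ⟨x p, Finset.mem_inter.mpr ⟨h1, hxpS⟩⟩
    have heq : e₀ ∩ S = {x p, x ((p + 1) % n)} := by
      apply Finset.Subset.antisymm
      · intro z hz
        obtain ⟨r, hr, hrz⟩ := (hSmem z).mp (Finset.mem_inter.mp hz).2
        subst hrz
        by_cases hzp : x r = x p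
        · rw [hzp]; exact Finset.mem_insert_self _ _
        · by_cases hzq : x r = x ((p + 1) % n)
          · rw [hzq]; exact Finset.mem_insert_of_mem (Finset.mem_singleton_self _)
          · exfalso
            have hrp : r ≠ p := fun h => hzp (by rw [h])
            have hrq : r ≠ (p + 1) % n := fun h => hzq (by rw [h])
            have a1 : G.Adj (x r) (x p) :=
              ⟨hzp, e₀, he₀, (Finset.mem_inter.mp hz).1, h1⟩
            have a2 : G.Adj (x r) (x ((p + 1) % n)) :=
              ⟨hzq, e₀, he₀, (Finset.mem_inter.mp hz).1, h2⟩
            rw [hxadj r p hr hp] at a1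
            rw [hxadj r _ hr hq] at a2
            have hqval : (p + 1) % n = p + 1 ∨ ((p + 1) % n = 0 ∧ p = n - 1) := by
              rcases Nat.lt_or_ge (p + 1) n with h | h
              · left; exact Nat.mod_eq_of_lt h
              · right; have : p + 1 = n := by omega
                rw [this, Nat.mod_self]; omega
            omega
      · intro z hz
        rcases Finset.mem_insert.mp hz with h | h
        · rw [h]; exact Finset.mem_inter.mpr ⟨h1, hxpS⟩
        · rw [Finset.mem_singleton.mp h]; exact Finset.mem_inter.mpr ⟨h2, hxqS⟩
    rw [← heq]
    exact hmem
  have hpair' : ∀ p, p + 1 < n → ({x p, x (p + 1)} : Finset ℕ) ∈ H'.edges := by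
    intro p hp
    have := hpair p (by omega)
    rwa [Nat.mod_eq_of_lt hp] at this
  -- the core
  set C : Finset ℕ := {x 0, x 2, x 4} with hCdef
  have hx02 : x 0 ≠ x 2 := fun h => by have := hxinj 0 2 (by omega) (by omega) h; omega
  have hx04 : x 0 ≠ x 4 := fun h => by have := hxinj 0 4 (by omega) (by omega) h; omega
  have hx24 : x 2 ≠ x 4 := fun h => by have := hxinj 2 4 (by omega) (by omega) h; omega
  have hCmem : ∀ u ∈ C, ∃ p, (p = 0 ∨ p = 2 ∨ p = 4) ∧ u = x p := by
    intro u hu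
    rcases Finset.mem_insert.mp hu with h | h
    · exact ⟨0, Or.inl rfl, h⟩
    · rcases Finset.mem_insert.mp h with h | h
      · exact ⟨2, Or.inr (Or.inl rfl), h⟩
      · exact ⟨4, Or.inr (Or.inr rfl), Finset.mem_singleton.mp h⟩
  have hxC : ∀ p, p < n → (x p ∈ C ↔ (p = 0 ∨ p = 2 ∨ p = 4)) := by
    intro p hp
    constructor
    · intro h
      obtain ⟨q, hq, hpq⟩ := hCmem _ h
      have : p = q := hxinj p q hp (by omega) hpq
      omega
    · intro h
      rcases h with h | h | h <;> subst h
      · exact Finset.mem_insert_self _ _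
      · exact Finset.mem_insert_of_mem (Finset.mem_insert_self _ _)
      · exact Finset.mem_insert_of_mem (Finset.mem_insert_of_mem (Finset.mem_singleton_self _))
  have hCcard : C.card = 3 := by
    rw [hCdef]
    rw [Finset.card_insert_of_notMem (by
      intro h
      rcases Finset.mem_insert.mp h with h | h
      · exact hx02 h
      · exact hx04 (Finset.mem_singleton.mp h))]
    rw [Finset.card_insert_of_notMem (by
      intro h; exact hx24 (Finset.mem_singleton.mp h))]
    rfl
  have hCS : C ⊆ S := by
    intro u hu
    obtain ⟨p, hp, rfl⟩ := hCmem u hu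
    exact hxS p (by omega)
  -- condition (1)
  have cond1 : ∀ e ∈ (H'.trim C ⊤).edges, e.card ≤ 1 := by
    intro e he
    obtain ⟨e', he', rfl⟩ := Finset.mem_image.mp he
    have he'' := (Finset.mem_filter.mp he').1
    apply Finset.card_le_one.mpr
    intro u hu v hv
    have huC := (Finset.mem_inter.mp hu).2
    have hvC := (Finset.mem_inter.mp hv).2
    obtain ⟨p, hp, rfl⟩ := hCmem u huC
    obtain ⟨q, hq, rfl⟩ := hCmem v hvC
    by_contra hne
    have hadj := hedge_adj e' he'' _ (Finset.mem_inter.mp hu).1 _ (Finset.mem_inter.mp hv).1 hne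
    rw [hxadj p q (by omega) (by omega)] at hadj
    omega
  -- the trimmed complement hypergraph
  set Ht := H'.trim (H'.verts \ C) ⊤ with hHtdef
  set W : Finset ℕ := H'.verts \ C with hWdef
  have hWverts : Ht.verts = W := Finset.inter_eq_right.mpr Finset.sdiff_subset
  have hxW : ∀ p, p < n → p ≠ 0 → p ≠ 2 → p ≠ 4 → x p ∈ W := by
    intro p hp h0 h2 h4
    rw [hWdef]
    refine Finset.mem_sdiff.mpr ⟨by rw [hvS]; exact hxS p hp, ?_⟩
    rw [hxC p hp]; omega
  have hWx : ∀ u ∈ W, ∃ p, p < n ∧ p ≠ 0 ∧ p ≠ 2 ∧ p ≠ 4 ∧ u = x p := by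
    intro u hu
    have h1 := Finset.mem_sdiff.mp hu
    obtain ⟨p, hp, rfl⟩ := (hSmem u).mp (by rw [← hvS]; exact h1.1)
    refine ⟨p, hp, ?_, ?_, ?_, rfl⟩ <;>
      (intro h; exact h1.2 (by rw [hxC p hp]; omega))
  have t1 : ∀ u v, Ht.Adj u v → u ∈ W ∧ v ∈ W ∧ ∃ e' ∈ H'.edges, u ∈ e' ∧ v ∈ e' := by
    rintro u v ⟨e, he, hu, hv⟩
    obtain ⟨e', he', rfl⟩ := Finset.mem_image.mp he
    have he'' := (Finset.mem_filter.mp he').1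
    exact ⟨(Finset.mem_inter.mp hu).2, (Finset.mem_inter.mp hv).2,
      e', he'', (Finset.mem_inter.mp hu).1, (Finset.mem_inter.mp hv).1⟩
  have t5 : ∀ u v e', e' ∈ H'.edges → u ∈ e' → v ∈ e' → u ∈ W → v ∈ W → Ht.Adj u v := by
    intro u v e' he' hu hv huW hvW
    refine ⟨e' ∩ (H'.verts \ C), ?_, Finset.mem_inter.mpr ⟨hu, huW⟩, Finset.mem_inter.mpr ⟨hv, hvW⟩⟩
    exact Finset.mem_image.mpr ⟨e', Finset.mem_filter.mpr ⟨he', le_top,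
      ⟨u, Finset.mem_inter.mpr ⟨hu, huW⟩⟩⟩, rfl⟩
  -- characterize steps
  have tchar : ∀ u v, Ht.Adj u v → ∃ p q, p < n ∧ q < n ∧ u = x p ∧ v = x q ∧
      (p ≠ 0 ∧ p ≠ 2 ∧ p ≠ 4) ∧ (q ≠ 0 ∧ q ≠ 2 ∧ q ≠ 4) ∧ (p = q ∨ q = p + 1 ∨ p = q + 1) := by
    intro u v huv
    obtain ⟨huW, hvW, e', he', hue, hve⟩ := t1 u v huv
    obtain ⟨p, hp, hp0, hp2, hp4, rfl⟩ := hWx u huW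
    obtain ⟨q, hq, hq0, hq2, hq4, rfl⟩ := hWx v hvW
    refine ⟨p, q, hp, hq, rfl, rfl, ⟨hp0, hp2, hp4⟩, ⟨hq0, hq2, hq4⟩, ?_⟩
    by_cases hne : x p = x q
    · left; exact hxinj p q hp hq hne
    · have hadj := hedge_adj e' he' _ hue _ hve hne
      rw [hxadj p q hp hq] at hadj
      omega
  -- reachability invariant
  have reach_inv : ∀ (Q : ℕ → Prop) (p₀ : ℕ), p₀ < n → Q p₀ →
      (∀ p q, Q p → p < n → q < n → (p ≠ 0 ∧ p ≠ 2 ∧ p ≠ 4) → (q ≠ 0 ∧ q ≠ 2 ∧ q ≠ 4) →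
        (q = p + 1 ∨ p = q + 1) → Q q) →
      ∀ u, Relation.ReflTransGen Ht.Adj (x p₀) u → ∃ q, q < n ∧ Q q ∧ u = x q := by
    intro Q p₀ hp₀ hQ0 hstep u h
    induction h with
    | refl => exact ⟨p₀, hp₀, hQ0, rfl⟩
    | @tail y z hy hstep' ih =>
      obtain ⟨q, hq, hQq, rfl⟩ := ih
      obtain ⟨p', q', hp', hq', hy1, hy2, hp'ne, hq'ne, hcons⟩ := tchar _ _ hstep'
      have hqp' : q = p' := hxinj q p' hq hp' hy1
      subst hqp'
      rcases hcons with h | h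
      · exact ⟨q', hq', by rw [← h]; exact hQq, hy2⟩
      · exact ⟨q', hq', hstep q q' hQq hq hq' hp'ne hq'ne h, hy2⟩
  -- components
  set compOf : ℕ → Finset ℕ := fun w => Ht.verts.filter fun u => Relation.ReflTransGen Ht.Adj w u
    with hcompOf
  have hcomp_is : ∀ p, p < n → p ≠ 0 → p ≠ 2 → p ≠ 4 → Ht.IsComponent (compOf (x p)) := by
    intro p hp h0 h2 h4
    exact ⟨x p, by rw [hWverts]; exact hxW p hp h0 h2 h4, rfl⟩
  have hself : ∀ p, p < n → p ≠ 0 → p ≠ 2 → p ≠ 4 → x p ∈ compOf (x p) := by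
    intro p hp h0 h2 h4
    exact Finset.mem_filter.mpr ⟨by rw [hWverts]; exact hxW p hp h0 h2 h4, Relation.ReflTransGen.refl⟩
  have hcompD : ∀ w u, u ∈ compOf w → Relation.ReflTransGen Ht.Adj w u :=
    fun w u hu => (Finset.mem_filter.mp hu).2
  -- reach characterizations
  have r1 : ∀ u, Relation.ReflTransGen Ht.Adj (x 1) u → u = x 1 := by
    intro u h
    obtain ⟨q, hq, hQ, rfl⟩ := reach_inv (fun q => q = 1) 1 (by omega) rfl (by omega) u h
    rw [hQ]
  have r3 : ∀ u, Relation.ReflTransGen Ht.Adj (x 3) u → u = x 3 := by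
    intro u h
    obtain ⟨q, hq, hQ, rfl⟩ := reach_inv (fun q => q = 3) 3 (by omega) rfl (by omega) u h
    rw [hQ]
  have r5 : ∀ p₀, 5 ≤ p₀ → p₀ < n → ∀ u, Relation.ReflTransGen Ht.Adj (x p₀) u →
      ∃ q, 5 ≤ q ∧ q < n ∧ u = x q := by
    intro p₀ h5 hp₀ u h
    obtain ⟨q, hq, hQ, rfl⟩ := reach_inv (fun q => 5 ≤ q) p₀ hp₀ h5 (by omega) u h
    exact ⟨q, hQ, hq, rfl⟩
  -- walk up the long path
  have walkup : ∀ q, 5 ≤ q → q < n → Relation.ReflTransGen Ht.Adj (x 5) (x q) := by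
    intro q h5 hq
    induction q with
    | zero => omega
    | succ m ih =>
      rcases Nat.lt_or_ge m 5 with h | h
      · have : m = 4 := by omega
        subst this
        exact Relation.ReflTransGen.refl
      · refine (ih (by omega) (by omega)).tail ?_
        exact t5 (x m) (x (m+1)) _ (hpair' m hq) (Finset.mem_insert_self _ _)
          (Finset.mem_insert_of_mem (Finset.mem_singleton_self _))
          (hxW m (by omega) (by omega) (by omega) (by omega))
          (hxW (m+1) (by omega) (by omega) (by omega) (by omega))
  -- uncovered core vertices
  have uncov : ∀ w, w ∈ C → ∀ D : Finset ℕ, (∀ d ∈ D, ¬ G.Adj w d) →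
      ∀ e ∈ obstructionEdges H' C D, w ∉ e := by
    intro w hwC D hno e he hwe
    have he' := Finset.mem_filter.mp he
    obtain ⟨y, hy, hyne⟩ := Finset.exists_mem_ne he'.2.2 w
    rcases Finset.mem_union.mp (he'.2.1 hy) with h | h
    · -- two distinct core vertices in one edge
      obtain ⟨p, hp, rfl⟩ := hCmem y h
      obtain ⟨q, hq, rfl⟩ := hCmem w hwC
      have hadj := hedge_adj e he'.1 _ hy _ hwe hyne
      rw [hxadj p q (by omega) (by omega)] at hadj
      have : p ≠ q := fun hh => hyne (by rw [hh])
      omega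
    · exact hno y h ((hedge_adj e he'.1 _ hwe _ hy (Ne.symm hyne)))
  -- small helper to build obstruction edges
  have mkObs : ∀ (p : ℕ) D, p + 1 < n → ((x p ∈ C ∧ x (p+1) ∈ D) ∨ (x p ∈ D ∧ x (p+1) ∈ C)) →
      ({x p, x (p+1)} : Finset ℕ) ∈ obstructionEdges H' C D := by
    intro p D hp hcase
    refine Finset.mem_filter.mpr ⟨hpair' p hp, ?_, ?_⟩
    · intro z hz
      rcases Finset.mem_insert.mp hz with h | h
      · subst h
        rcases hcase with ⟨h1, -⟩ | ⟨h1, -⟩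
        · exact Finset.mem_union_left _ h1
        · exact Finset.mem_union_right _ h1
      · rw [Finset.mem_singleton.mp h]
        rcases hcase with ⟨-, h2⟩ | ⟨-, h2⟩
        · exact Finset.mem_union_right _ h2
        · exact Finset.mem_union_left _ h2
    · refine Finset.one_lt_card.mpr ⟨x p, Finset.mem_insert_self _ _,
        x (p+1), Finset.mem_insert_of_mem (Finset.mem_singleton_self _), ?_⟩
      intro h
      have := hxinj p (p+1) (by omega) hp h
      omega
  -- the component map
  set Dfun : ℕ → Finset ℕ := fun v => if v = x 0 then compOf (x 3) else if v = x 2 then compOf (x 5)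
    else compOf (x 1) with hDfun
  have hD0 : Dfun (x 0) = compOf (x 3) := by rw [hDfun]; simp
  have hD2 : Dfun (x 2) = compOf (x 5) := by
    rw [hDfun]; simp only [if_neg (Ne.symm hx02)]; simp
  have hD4 : Dfun (x 4) = compOf (x 1) := by
    rw [hDfun]; simp only [if_neg (Ne.symm hx04), if_neg (Ne.symm hx24)]
  refine ⟨3, le_refl 3, C, by rw [hvS]; exact hCS, hCcard, cond1, ?_, Dfun, ?_, ?_⟩
  · -- condition (2)
    intro D hD hsub
    obtain ⟨v₀, hv₀, hDeq⟩ := hD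
    rw [hWverts] at hv₀
    obtain ⟨p₀, hp₀, h0, h2, h4, rfl⟩ := hWx v₀ hv₀
    have hDreach : ∀ d ∈ D, Relation.ReflTransGen Ht.Adj (x p₀) d := by
      intro d hd
      rw [hDeq] at hd
      exact (Finset.mem_filter.mp hd).2
    by_cases hc1 : p₀ = 1
    · subst hc1
      have hno : ∀ d ∈ D, ¬ G.Adj (x 4) d := by
        intro d hd hadj
        have := r1 d (hDreach d hd)
        subst this
        rw [hxadj 4 1 (by omega) (by omega)] at hadj
        omega
      have h4C : x 4 ∈ C := (hxC 4 (by omega)).mpr (by omega)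
      obtain ⟨e, he, h4e⟩ := Finset.mem_biUnion.mp (hsub h4C)
      exact uncov (x 4) h4C D hno e he h4e
    · by_cases hc3 : p₀ = 3
      · subst hc3
        have hno : ∀ d ∈ D, ¬ G.Adj (x 0) d := by
          intro d hd hadj
          have := r3 d (hDreach d hd)
          subst this
          rw [hxadj 0 3 (by omega) (by omega)] at hadj
          omega
        have h0C : x 0 ∈ C := (hxC 0 (by omega)).mpr (by omega)
        obtain ⟨e, he, h0e⟩ := Finset.mem_biUnion.mp (hsub h0C)
        exact uncov (x 0) h0C D hno e he h0e
      · have hp5 : 5 ≤ p₀ := by omega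
        have hno : ∀ d ∈ D, ¬ G.Adj (x 2) d := by
          intro d hd hadj
          obtain ⟨q, hq5, hq, rfl⟩ := r5 p₀ hp5 hp₀ d (hDreach d hd)
          rw [hxadj 2 q (by omega) hq] at hadj
          omega
        have h2C : x 2 ∈ C := (hxC 2 (by omega)).mpr (by omega)
        obtain ⟨e, he, h2e⟩ := Finset.mem_biUnion.mp (hsub h2C)
        exact uncov (x 2) h2C D hno e he h2e
  · -- injectivity of Dfun on C
    have c35 : compOf (x 3) ≠ compOf (x 5) := by
      intro h
      have h3 : x 3 ∈ compOf (x 5) := h ▸ hself 3 (by omega) (by omega) (by omega) (by omega)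
      obtain ⟨q, hq5, hq, hxq⟩ := r5 5 (le_refl 5) (by omega) (x 3) (hcompD _ _ h3)
      have := hxinj 3 q (by omega) hq hxq
      omega
    have c31 : compOf (x 3) ≠ compOf (x 1) := by
      intro h
      have h3 : x 3 ∈ compOf (x 1) := h ▸ hself 3 (by omega) (by omega) (by omega) (by omega)
      have := hxinj 3 1 (by omega) (by omega) (r1 (x 3) (hcompD _ _ h3))
      omega
    have c51 : compOf (x 5) ≠ compOf (x 1) := by
      intro h
      have h5 : x 5 ∈ compOf (x 1) := h ▸ hself 5 (by omega) (by omega) (by omega) (by omega)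
      have := hxinj 5 1 (by omega) (by omega) (r1 (x 5) (hcompD _ _ h5))
      omega
    intro u hu v hv heq
    obtain ⟨p, hp, rfl⟩ := hCmem u hu
    obtain ⟨q, hq, rfl⟩ := hCmem v hv
    have : p = q := by
      rcases hp with h | h | h <;> rcases hq with h' | h' | h' <;> subst h <;> subst h' <;>
        first
        | rfl
        | (exfalso
           simp only [hD0, hD2, hD4] at heq
           first
           | exact c35 heq | exact c31 heq | exact c51 heq
           | exact c35 heq.symm | exact c31 heq.symm | exact c51 heq.symm)
    rw [this]
  · -- the component conditions
    intro c' hc'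
    obtain ⟨p, hp, rfl⟩ := hCmem c' hc'
    rcases hp with h | h | h <;> subst h
    · -- c' = x 0, D = compOf (x 3)
      rw [hD0]
      refine ⟨hcomp_is 3 (by omega) (by omega) (by omega) (by omega), ?_, ?_⟩
      · intro z hz
        have hzC := Finset.mem_of_mem_erase hz
        have hzne := Finset.ne_of_mem_erase hz
        obtain ⟨q, hq, rfl⟩ := hCmem z hzC
        have hq' : q = 2 ∨ q = 4 := by
          rcases hq with h | h | h
          · exact absurd (by rw [h]) hzne
          · omega
          · omega
        rcases hq' with h | h <;> subst h
        · refine Finset.mem_biUnion.mpr ⟨{x 2, x 3}, ?_, Finset.mem_insert_self _ _⟩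
          refine mkObs 2 _ (by omega) (Or.inl ⟨(hxC 2 (by omega)).mpr (by omega), ?_⟩)
          exact hself 3 (by omega) (by omega) (by omega) (by omega)
        · refine Finset.mem_biUnion.mpr ⟨{x 3, x 4}, ?_,
            Finset.mem_insert_of_mem (Finset.mem_singleton_self _)⟩
          refine mkObs 3 _ (by omega) (Or.inr ⟨?_, (hxC 4 (by omega)).mpr (by omega)⟩)
          exact hself 3 (by omega) (by omega) (by omega) (by omega)
      · refine uncov (x 0) ((hxC 0 (by omega)).mpr (by omega)) _ ?_
        intro d hd hadj
        have := r3 d (hcompD _ _ hd)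
        subst this
        rw [hxadj 0 3 (by omega) (by omega)] at hadj
        omega
    · -- c' = x 2, D = compOf (x 5)
      rw [hD2]
      refine ⟨hcomp_is 5 (by omega) (by omega) (by omega) (by omega), ?_, ?_⟩
      · intro z hz
        have hzC := Finset.mem_of_mem_erase hz
        have hzne := Finset.ne_of_mem_erase hz
        obtain ⟨q, hq, rfl⟩ := hCmem z hzC
        have hq' : q = 0 ∨ q = 4 := by
          rcases hq with h | h | h
          · omega
          · exact absurd (by rw [h]) hzne
          · omega
        rcases hq' with h | h <;> subst h
        · -- use the wrap-around edge {x (n-1), x 0}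
          have hwrap : ({x (n-1), x ((n-1+1) % n)} : Finset ℕ) ∈ H'.edges := hpair (n-1) (by omega)
          have hmodn : (n - 1 + 1) % n = 0 := by
            have : n - 1 + 1 = n := by omega
            rw [this, Nat.mod_self]
          rw [hmodn] at hwrap
          refine Finset.mem_biUnion.mpr ⟨{x (n-1), x 0}, ?_,
            Finset.mem_insert_of_mem (Finset.mem_singleton_self _)⟩
          refine Finset.mem_filter.mpr ⟨hwrap, ?_, ?_⟩
          · intro y hy
            rcases Finset.mem_insert.mp hy with h | h
            · subst h
              refine Finset.mem_union_right _ (Finset.mem_filter.mpr ?_)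
              refine ⟨by rw [hWverts]; exact hxW (n-1) (by omega) (by omega) (by omega) (by omega),
                walkup (n-1) (by omega) (by omega)⟩
            · rw [Finset.mem_singleton.mp h]
              exact Finset.mem_union_left _ ((hxC 0 (by omega)).mpr (by omega))
          · refine Finset.one_lt_card.mpr ⟨x (n-1), Finset.mem_insert_self _ _,
              x 0, Finset.mem_insert_of_mem (Finset.mem_singleton_self _), ?_⟩
            intro h
            have := hxinj (n-1) 0 (by omega) (by omega) h
            omega
        · refine Finset.mem_biUnion.mpr ⟨{x 4, x 5}, ?_, Finset.mem_insert_self _ _⟩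
          refine mkObs 4 _ (by omega) (Or.inl ⟨(hxC 4 (by omega)).mpr (by omega), ?_⟩)
          exact hself 5 (by omega) (by omega) (by omega) (by omega)
      · refine uncov (x 2) ((hxC 2 (by omega)).mpr (by omega)) _ ?_
        intro d hd hadj
        obtain ⟨q, hq5, hq, rfl⟩ := r5 5 (le_refl 5) (by omega) d (hcompD _ _ hd)
        rw [hxadj 2 q (by omega) hq] at hadj
        omega
    · -- c' = x 4, D = compOf (x 1)
      rw [hD4]
      refine ⟨hcomp_is 1 (by omega) (by omega) (by omega) (by omega), ?_, ?_⟩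
      · intro z hz
        have hzC := Finset.mem_of_mem_erase hz
        have hzne := Finset.ne_of_mem_erase hz
        obtain ⟨q, hq, rfl⟩ := hCmem z hzC
        have hq' : q = 0 ∨ q = 2 := by
          rcases hq with h | h | h
          · omega
          · omega
          · exact absurd (by rw [h]) hzne
        rcases hq' with h | h <;> subst h
        · refine Finset.mem_biUnion.mpr ⟨{x 0, x 1}, ?_, Finset.mem_insert_self _ _⟩
          refine mkObs 0 _ (by omega) (Or.inl ⟨(hxC 0 (by omega)).mpr (by omega), ?_⟩)
          exact hself 1 (by omega) (by omega) (by omega) (by omega)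
        · refine Finset.mem_biUnion.mpr ⟨{x 1, x 2}, ?_,
            Finset.mem_insert_of_mem (Finset.mem_singleton_self _)⟩
          refine mkObs 1 _ (by omega) (Or.inr ⟨?_, (hxC 2 (by omega)).mpr (by omega)⟩)
          exact hself 1 (by omega) (by omega) (by omega) (by omega)
      · refine uncov (x 4) ((hxC 4 (by omega)).mpr (by omega)) _ ?_
        intro d hd hadj
        have := r1 d (hcompD _ _ hd)
        subst this
        rw [hxadj 4 1 (by omega) (by omega)] at hadj
        omega


theorem stmt11 (H : HGraph) (hH : H.Good) :
    ITSFree ⊤ H ↔ ¬ ∃ n, 6 ≤ n ∧ HasInducedCycle (cliqueCompletion H) n := by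
  constructor
  · rintro hfree ⟨n, hn, hcyc⟩
    obtain ⟨S, hS, hobs⟩ := dirA H hH n hn hcyc
    exact hfree S hS hobs
  · intro hno S hS hobs
    exact hno (dirB H hH S hS hobs)

end
end

section
/- With G^H_l constructed as in the context from a k-colored hypergraph G all of whose hyperedges have arity exactly k−1: there is a linear ordering of V(G^H_l) — placing first all copied vertices ∪_e V_i^e, then the vertices of V(G), then the vertices of V^ext — under which every vertex has l-outdegree at most |E(H)| · |V(H)|; consequently the l-degeneracy of G^H_l is bounded by a constant depending only on H and not on G. -/
open scoped Classical

noncomputable section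

theorem stmt14 (l : ℕ∞) (k h : ℕ) (H : HGraph) (hH : H.Good)
    (hh : h = H.verts.card)
    (S : Finset ℕ) (hS : S ⊆ H.verts)
    (x : ℕ → ℕ) (Vp : ℕ → Finset ℕ) (Ep : ℕ → Finset (Finset ℕ))
    (hW : InHlkWitness l k (H.trim S ⊤) x Vp Ep)
    (π : ℕ → ℕ) (hπ : Set.BijOn π ↑H.verts ↑(Finset.range h))
    (hπx : ∀ i < k, π (x i) = i) :
    ∃ C : ℕ, ∀ G : HGraph, G.Good →
      ∀ c : ℕ → ℕ, Set.MapsTo c ↑G.verts ↑(Finset.range k) →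
        (∀ e ∈ G.edges, e.card = k - 1) →
        (∃ ρ : ℕ → ℕ,
          Set.InjOn ρ ↑(GHl H G S ((Finset.range k).image x) Vp π c k).verts ∧
          (∀ u ∈ (GHl H G S ((Finset.range k).image x) Vp π c k).verts,
            ∀ v ∈ (GHl H G S ((Finset.range k).image x) Vp π c k).verts,
              GHlGroup u < GHlGroup v → ρ u < ρ v) ∧
          ∀ v ∈ (GHl H G S ((Finset.range k).image x) Vp π c k).verts,
            loutdeg (GHl H G S ((Finset.range k).image x) Vp π c k) ρ l v ≤
              H.edges.card * H.verts.card) ∧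
        (GHl H G S ((Finset.range k).image x) Vp π c k).degeneracy l ≤ C := by
  classical
  obtain ⟨hxinj, hVdisj, hVX, hverts, hEdisj, hedges, hcon⟩ := hW
  set X : Finset ℕ := (Finset.range k).image x with hXdef
  refine ⟨2 ^ (H.edges.card * H.verts.card), ?_⟩
  intro G hG c hc har
  set GG : HGraph := GHl H G S X Vp π c k with hGG
  set N : ℕ := GG.verts.sup id with hN
  set ρ : ℕ → ℕ := fun m => GHlGroup m * (N + 1) + m with hρ
  have hle : ∀ m ∈ GG.verts, m ≤ N := fun m hm => Finset.le_sup (f := id) hm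
  have hgP0 : ∀ a, GHlGroup (Nat.pair 0 a) = 1 := by
    intro a; simp [GHlGroup, Nat.unpair_pair]
  have hgP1 : ∀ a, GHlGroup (Nat.pair 1 a) = 2 := by
    intro a; simp [GHlGroup, Nat.unpair_pair]
  have hgP2 : ∀ a, GHlGroup (Nat.pair 2 a) = 0 := by
    intro a; simp [GHlGroup, Nat.unpair_pair]
  have hmono : ∀ u ∈ GG.verts, ∀ v ∈ GG.verts, GHlGroup u < GHlGroup v → ρ u < ρ v := by
    intro u hu v hv hlt
    have hu' := hle u hu
    have h1 : GHlGroup u * (N + 1) + (N + 1) ≤ GHlGroup v * (N + 1) := by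
      calc GHlGroup u * (N + 1) + (N + 1) = (GHlGroup u + 1) * (N + 1) := by ring
        _ ≤ GHlGroup v * (N + 1) := Nat.mul_le_mul_right _ hlt
    show GHlGroup u * (N + 1) + u < GHlGroup v * (N + 1) + v
    have h2 : GHlGroup u * (N + 1) + u < GHlGroup u * (N + 1) + (N + 1) :=
      Nat.add_lt_add_left (by omega) _
    exact lt_of_lt_of_le h2 (le_trans h1 (Nat.le_add_right _ _))
  have hinj : Set.InjOn ρ ↑GG.verts := by
    intro u hu v hv huv
    have h1 : (GHlGroup u * (N + 1) + u) % (N + 1) = (GHlGroup v * (N + 1) + v) % (N + 1) := by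
      exact congrArg (· % (N + 1)) huv
    rw [Nat.mul_comm (GHlGroup u), Nat.mul_comm (GHlGroup v)] at h1
    rw [Nat.mul_add_mod, Nat.mul_add_mod,
      Nat.mod_eq_of_lt (by have := hle u hu; omega),
      Nat.mod_eq_of_lt (by have := hle v hv; omega)] at h1
    exact h1
  -- membership decompositions
  have hvertcases : ∀ w ∈ GG.verts,
      (∃ a ∈ G.verts, w = Nat.pair 0 a) ∨ (∃ a ∈ H.verts \ S, w = Nat.pair 1 a) ∨
      (∃ i < k, ∃ e ∈ G.edges, (e.card = k - 1 ∧ e.image c = (Finset.range k).erase i) ∧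
        ∃ b ∈ Vp i, w = Nat.pair 2 (Nat.pair (Encodable.encode e) b)) := by
    intro w hw
    rw [hGG] at hw
    simp only [GHl, Finset.mem_union, Finset.mem_image, Finset.mem_biUnion, Finset.mem_filter,
      Finset.mem_range] at hw
    rcases hw with (⟨a, ha, rfl⟩ | ⟨a, ha, rfl⟩) | ⟨i, hi, e, he, b, hb, rfl⟩
    · exact Or.inl ⟨a, ha, rfl⟩
    · exact Or.inr (Or.inl ⟨a, ha, rfl⟩)
    · exact Or.inr (Or.inr ⟨i, hi, e, he.1, he.2, b, hb, rfl⟩)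
  have hvertP2 : ∀ i < k, ∀ e ∈ G.edges, e.card = k - 1 → e.image c = (Finset.range k).erase i →
      ∀ b ∈ Vp i, Nat.pair 2 (Nat.pair (Encodable.encode e) b) ∈ GG.verts := by
    intro i hi e he h1 h2 b hb
    rw [hGG]
    simp only [GHl, Finset.mem_union, Finset.mem_image, Finset.mem_biUnion, Finset.mem_filter,
      Finset.mem_range]
    exact Or.inr ⟨i, hi, e, ⟨he, h1, h2⟩, b, hb, rfl⟩
  have hedgecases : ∀ E ∈ GG.edges,
      (∃ e0 ∈ H.edges, e0 ⊆ H.verts \ S ∧ E = e0.image (Nat.pair 1)) ∨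
      (∃ i < k, ∃ e ∈ G.edges, (e.card = k - 1 ∧ e.image c = (Finset.range k).erase i) ∧
        ∃ e' ∈ H.edges, ¬ e' ⊆ H.verts \ S ∧ e' ⊆ X ∪ Vp i ∪ (H.verts \ S) ∧
          E = e'.image (liftVert S X π c e)) := by
    intro E hE
    rw [hGG] at hE
    simp only [GHl, Finset.mem_union, Finset.mem_image, Finset.mem_biUnion, Finset.mem_filter,
      Finset.mem_range] at hE
    rcases hE with ⟨e0, he0, rfl⟩ | ⟨i, hi, e, he, e', he', rfl⟩
    · exact Or.inl ⟨e0, he0.1, he0.2, rfl⟩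
    · exact Or.inr ⟨i, hi, e, he.1, he.2, e', he'.1, he'.2.1, he'.2.2, rfl⟩
  -- basic facts from the witness
  have htv : H.verts ∩ S = X ∪ (Finset.range k).biUnion Vp := hverts
  have hXS : X ⊆ S := by
    intro a ha
    have : a ∈ H.verts ∩ S := by rw [htv]; exact Finset.mem_union_left _ ha
    exact (Finset.mem_inter.1 this).2
  have hVpHS : ∀ i < k, Vp i ⊆ H.verts ∩ S := by
    intro i hi b hb
    rw [htv]
    exact Finset.mem_union_right _ (Finset.mem_biUnion.2 ⟨i, Finset.mem_range.2 hi, hb⟩)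
  -- the blocking lemma: a lifted hyperedge with ≥ 2 core vertices kills skeleton arcs
  -- out of group-≥1 vertices
  have hblock : ∀ i < k, ∀ e' ∈ H.edges, e' ⊆ X ∪ Vp i ∪ (H.verts \ S) →
      ∀ e ∈ G.edges, e.card = k - 1 → e.image c = (Finset.range k).erase i →
      ∀ u, 1 ≤ GHlGroup u → u ∈ GG.verts → 2 ≤ (e' ∩ X).card →
      ¬ ((((e'.image (liftVert S X π c e)).filter fun w => ρ w < ρ u).card : ℕ∞) ≤ l) := by
    intro i hi e' he' hsub e he hcard himg u hgu hu h2X hfil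
    have hnS : (e' ∩ S).Nonempty := by
      obtain ⟨a, ha⟩ := Finset.card_pos.1 (lt_of_lt_of_le (by norm_num) h2X)
      rw [Finset.mem_inter] at ha
      exact ⟨a, Finset.mem_inter.2 ⟨ha.1, hXS ha.2⟩⟩
    have htrimmem : e' ∩ S ∈ (H.trim S ⊤).edges := by
      simp only [HGraph.trim, Finset.mem_image, Finset.mem_filter]
      exact ⟨e', ⟨he', le_top, hnS⟩, rfl⟩
    rw [hedges] at htrimmem
    obtain ⟨i', hi', hEp⟩ := Finset.mem_biUnion.1 htrimmem
    rw [Finset.mem_range] at hi'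
    obtain ⟨hEpsub, hconn⟩ := hcon i' hi'
    obtain ⟨-, -, hcond, -⟩ := hconn
    set X' : Finset ℕ := X.erase (x i') with hX'def
    have hsub' : e' ∩ S ⊆ Vp i' ∪ X' := hEpsub _ hEp
    have h2X' : 2 ≤ ((e' ∩ S) ∩ X').card := by
      refine le_trans h2X (Finset.card_le_card ?_)
      intro a ha
      rw [Finset.mem_inter] at ha
      have haS : a ∈ e' ∩ S := Finset.mem_inter.2 ⟨ha.1, hXS ha.2⟩
      have := hsub' haS
      rw [Finset.mem_union] at this
      rcases this with h | h
      · exact absurd ha.2 ((Finset.disjoint_left.1 (hVX i' hi')) h)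
      · exact Finset.mem_inter.2 ⟨haS, h⟩
    have hl : l < ((((e' ∩ S) \ X').card : ℕ∞)) := hcond _ hEp h2X'
    set D : Finset ℕ := (e' ∩ S) \ X' with hDdef
    have hD : ∀ b ∈ D, b ∈ Vp i ∧ b ∉ X ∧ b ∈ S := by
      intro b hb
      rw [hDdef, Finset.mem_sdiff, Finset.mem_inter] at hb
      obtain ⟨⟨hbe, hbS⟩, hbX'⟩ := hb
      have hbVp' : b ∈ Vp i' := by
        have := hsub' (Finset.mem_inter.2 ⟨hbe, hbS⟩)
        rw [Finset.mem_union] at this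
        rcases this with h | h
        · exact h
        · exact absurd h hbX'
      have hbX : b ∉ X := fun hbX => (Finset.disjoint_left.1 (hVX i' hi')) hbVp' hbX
      have hbH : b ∈ H.verts := (Finset.mem_inter.1 (hVpHS i' hi' hbVp')).1
      have := hsub hbe
      rw [Finset.mem_union, Finset.mem_union] at this
      rcases this with (h | h) | h
      · exact absurd h hbX
      · exact ⟨h, hbX, hbS⟩
      · exact absurd (Finset.mem_sdiff.1 h).2 (by simpa using hbS)
    have hlift : ∀ b ∈ D, liftVert S X π c e b = Nat.pair 2 (Nat.pair (Encodable.encode e) b) := by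
      intro b hb
      obtain ⟨-, hbX, hbS⟩ := hD b hb
      simp [liftVert, hbX, hbS]
    set T : Finset ℕ := D.image (liftVert S X π c e) with hTdef
    have hTcard : T.card = D.card := by
      rw [hTdef]
      apply Finset.card_image_of_injOn
      intro b1 hb1 b2 hb2 heq
      rw [hlift b1 hb1, hlift b2 hb2] at heq
      have := (Nat.pair_eq_pair.1 heq).2
      exact (Nat.pair_eq_pair.1 this).2
    have hTsub : T ⊆ (e'.image (liftVert S X π c e)).filter fun w => ρ w < ρ u := by
      intro w hw
      rw [hTdef, Finset.mem_image] at hw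
      obtain ⟨b, hb, rfl⟩ := hw
      obtain ⟨hbVp, -, -⟩ := hD b hb
      have hbE : b ∈ e' := (Finset.mem_inter.1 (Finset.mem_sdiff.1 hb).1).1
      rw [hlift b hb]
      refine Finset.mem_filter.2 ⟨Finset.mem_image.2 ⟨b, hbE, hlift b hb⟩, ?_⟩
      have hwv : Nat.pair 2 (Nat.pair (Encodable.encode e) b) ∈ GG.verts :=
        hvertP2 i hi e he hcard himg b hbVp
      exact hmono _ hwv u hu (by rw [hgP2]; omega)
    have : l < ((((e'.image (liftVert S X π c e)).filter fun w => ρ w < ρ u).card : ℕ∞)) := by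
      refine lt_of_lt_of_le hl ?_
      rw [← hTcard]
      exact_mod_cast Nat.cast_le.2 (Finset.card_le_card hTsub)
    exact absurd hfil (not_le.2 this)
  -- out-neighbors of group-≥1 vertices are group-2 vertices
  have hout : ∀ u ∈ GG.verts, 1 ≤ GHlGroup u → ∀ v ∈ GG.verts, SkelArc GG ρ l u v →
      v ∈ (H.verts \ S).image (Nat.pair 1) := by
    intro u hu hgu v hv harc
    obtain ⟨E, hE, huE, hvE, hρuv, hfil⟩ := harc
    have hgle : GHlGroup u ≤ GHlGroup v := by
      by_contra hcon'
      push_neg at hcon'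
      exact absurd hρuv (not_lt.2 (le_of_lt (hmono v hv u hu hcon')))
    have hg2 : ∀ m, GHlGroup m ≤ 2 := by
      intro m; unfold GHlGroup; split_ifs <;> omega
    rcases Nat.lt_or_ge (GHlGroup v) 2 with h2 | h2
    · -- group v = 1: both u and v are core (pair-0) vertices; blocked
      exfalso
      have hgv1 : GHlGroup v = 1 := by omega
      have hgu1 : GHlGroup u = 1 := by omega
      have huu : u.unpair.1 = 0 := by
        by_contra hne
        unfold GHlGroup at hgu1
        split_ifs at hgu1 <;> omega
      have hvu : v.unpair.1 = 0 := by
        by_contra hne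
        unfold GHlGroup at hgv1
        split_ifs at hgv1 <;> omega
      rcases hedgecases E hE with ⟨e0, he0, hsub0, rfl⟩ |
        ⟨i, hi, e, he, ⟨hcard, himg⟩, e', he', hns, hsub, rfl⟩
      · obtain ⟨a, -, rfl⟩ := Finset.mem_image.1 huE
        rw [Nat.unpair_pair] at huu
        exact absurd huu one_ne_zero
      · -- both u and v have preimages in X
        have hpre : ∀ w ∈ e'.image (liftVert S X π c e), w.unpair.1 = 0 → ∃ a ∈ e' ∩ X,
            liftVert S X π c e a = w := by
          intro w hw hw0
          obtain ⟨a, ha, rfl⟩ := Finset.mem_image.1 hw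
          refine ⟨a, Finset.mem_inter.2 ⟨ha, ?_⟩, rfl⟩
          by_contra haX
          unfold liftVert at hw0
          rw [if_neg haX] at hw0
          split_ifs at hw0 <;> simp [Nat.unpair_pair] at hw0
        obtain ⟨au, hau, haueq⟩ := hpre u huE huu
        obtain ⟨av, hav, haveq⟩ := hpre v hvE hvu
        have huvne : u ≠ v := fun hh => absurd hρuv (by rw [hh]; exact lt_irrefl _)
        have hneq : au ≠ av := fun hh => huvne (by rw [← haueq, ← haveq, hh])
        have h2X : 2 ≤ (e' ∩ X).card := by
          have : ({au, av} : Finset ℕ) ⊆ e' ∩ X := by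
            intro a ha
            rcases Finset.mem_insert.1 ha with rfl | ha
            · exact hau
            · rw [Finset.mem_singleton.1 ha]; exact hav
          calc 2 = ({au, av} : Finset ℕ).card := (Finset.card_pair hneq).symm
            _ ≤ _ := Finset.card_le_card this
        exact hblock i hi e' he' hsub e he hcard himg u (by omega) hu h2X hfil
    · -- group v = 2: v is an ext (pair-1) vertex
      have hgv2 : GHlGroup v = 2 := le_antisymm (hg2 v) h2
      rcases hvertcases v hv with ⟨a, ha, rfl⟩ | ⟨a, ha, rfl⟩ | ⟨i, hi, e, he, -, b, hb, rfl⟩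
      · rw [hgP0] at hgv2; omega
      · exact Finset.mem_image.2 ⟨a, ha, rfl⟩
      · rw [hgP2] at hgv2; omega
  -- the out-degree bound
  have hbound : ∀ u ∈ GG.verts, loutdeg GG ρ l u ≤ H.edges.card * H.verts.card := by
    intro u hu
    by_cases hE0 : H.edges = ∅
    · have hGGe : GG.edges = ∅ := by
        rw [hGG]
        simp [GHl, hE0]
        ext a
        simp
      have : GG.verts.filter (fun v => SkelArc GG ρ l u v) = ∅ := by
        refine Finset.eq_empty_of_forall_notMem fun v hv => ?_
        obtain ⟨E, hE, -⟩ := (Finset.mem_filter.1 hv).2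
        rw [hGGe] at hE
        exact absurd hE (Finset.notMem_empty _)
      unfold loutdeg
      rw [this]
      simp
    · have hEpos : 1 ≤ H.edges.card := Finset.card_pos.2 (Finset.nonempty_iff_ne_empty.2 hE0)
      by_cases hgu : 1 ≤ GHlGroup u
      · -- group ≥ 1: out-neighbors lie among ext vertices
        have hsub : GG.verts.filter (fun v => SkelArc GG ρ l u v) ⊆
            (H.verts \ S).image (Nat.pair 1) := by
          intro v hv
          rw [Finset.mem_filter] at hv
          exact hout u hu hgu v hv.1 hv.2
        calc loutdeg GG ρ l u ≤ ((H.verts \ S).image (Nat.pair 1)).card :=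
              Finset.card_le_card hsub
          _ ≤ (H.verts \ S).card := Finset.card_image_le
          _ ≤ H.verts.card := Finset.card_le_card (Finset.sdiff_subset)
          _ ≤ H.edges.card * H.verts.card := Nat.le_mul_of_pos_left _ hEpos
      · -- group 0: u is a copied vertex; few hyperedges contain it
        push_neg at hgu
        have hgu0 : GHlGroup u = 0 := by omega
        rcases hvertcases u hu with ⟨a, -, rfl⟩ | ⟨a, -, rfl⟩ |
          ⟨i, hi, e, he, ⟨hcard, himg⟩, b, hb, rfl⟩
        · rw [hgP0] at hgu0; omega
        · rw [hgP1] at hgu0; omega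
        · set u₀ := Nat.pair 2 (Nat.pair (Encodable.encode e) b) with hu₀
          set B : Finset (Finset ℕ) := H.edges.image (fun e' => e'.image (liftVert S X π c e))
            with hBdef
          have hsub : GG.verts.filter (fun v => SkelArc GG ρ l u₀ v) ⊆ B.biUnion id := by
            intro v hv
            obtain ⟨E, hE, huE, hvE, -, -⟩ := (Finset.mem_filter.1 hv).2
            have hEB : E ∈ B := by
              rcases hedgecases E hE with ⟨e0, he0, hsub0, rfl⟩ |
                ⟨i₂, hi₂, e₂, he₂, -, e'₂, he'₂, -, -, rfl⟩
              · obtain ⟨a, -, hau⟩ := Finset.mem_image.1 huE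
                exfalso
                have : u₀.unpair.1 = 1 := by rw [← hau, Nat.unpair_pair]
                rw [hu₀, Nat.unpair_pair] at this
                omega
              · obtain ⟨a, ha, hau⟩ := Finset.mem_image.1 huE
                have he₂e : e₂ = e := by
                  unfold liftVert at hau
                  split_ifs at hau with h1 h2
                  · exfalso
                    have : u₀.unpair.1 = 0 := by rw [← hau, Nat.unpair_pair]
                    rw [hu₀, Nat.unpair_pair] at this; omega
                  · have h3 : Nat.pair (Encodable.encode e₂) a =
                        Nat.pair (Encodable.encode e) b := by
                      have := congrArg (fun m => m.unpair.2) hau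
                      simpa [hu₀, Nat.unpair_pair] using this
                    exact Encodable.encode_injective (Nat.pair_eq_pair.1 h3).1
                  · exfalso
                    have : u₀.unpair.1 = 1 := by rw [← hau, Nat.unpair_pair]
                    rw [hu₀, Nat.unpair_pair] at this; omega
                rw [hBdef]
                exact Finset.mem_image.2 ⟨e'₂, he'₂, by rw [he₂e]⟩
            exact Finset.mem_biUnion.2 ⟨E, hEB, hvE⟩
          have hbcard : ∀ E ∈ B, E.card ≤ H.verts.card := by
            intro E hE
            obtain ⟨e', he', rfl⟩ := Finset.mem_image.1 hE
            calc (e'.image (liftVert S X π c e)).card ≤ e'.card := Finset.card_image_le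
              _ ≤ H.verts.card := Finset.card_le_card (hH e' he').1
          calc loutdeg GG ρ l u₀ ≤ (B.biUnion id).card := Finset.card_le_card hsub
            _ ≤ ∑ E ∈ B, (id E).card := Finset.card_biUnion_le
            _ ≤ B.card * H.verts.card := Finset.sum_le_card_nsmul B _ _ hbcard
            _ ≤ H.edges.card * H.verts.card :=
              Nat.mul_le_mul_right _ (le_trans Finset.card_image_le le_rfl)
  refine ⟨⟨ρ, hinj, hmono, hbound⟩, ?_⟩
  -- degeneracy bound from the ordering
  have hmem : (2 ^ (H.edges.card * H.verts.card)) ∈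
      {κ : ℕ | ∀ S' ⊆ GG.verts, S'.Nonempty → ∃ v ∈ S', (GG.trim S' l).degree v ≤ κ} := by
    intro S' hS' hne
    obtain ⟨v, hvS', hvmin⟩ := Finset.exists_min_image S' ρ hne
    refine ⟨v, hvS', ?_⟩
    have hvvert : v ∈ GG.verts := hS' hvS'
    set Out : Finset ℕ := GG.verts.filter (fun w => SkelArc GG ρ l v w) with hOut
    have hsubf : ∀ f ∈ (GG.trim S' l).edges.filter (fun f => v ∈ f), f.erase v ∈ Out.powerset := by
      intro f hf
      rw [Finset.mem_filter] at hf
      obtain ⟨hfmem, hvf⟩ := hf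
      simp only [HGraph.trim, Finset.mem_image, Finset.mem_filter] at hfmem
      obtain ⟨e, ⟨he, hecard, -⟩, rfl⟩ := hfmem
      rw [Finset.mem_powerset]
      intro w hw
      rw [Finset.mem_erase] at hw
      obtain ⟨hwv, hwf⟩ := hw
      have hwS' : w ∈ S' := (Finset.mem_inter.1 hwf).2
      have hvS'' : v ∈ e := (Finset.mem_inter.1 hvf).1
      have hwe : w ∈ e := (Finset.mem_inter.1 hwf).1
      have hρvw : ρ v < ρ w := by
        have h1 : ρ v ≤ ρ w := hvmin w hwS'
        have h2 : ρ v ≠ ρ w := fun h => hwv (hinj (hS' hwS') (hS' hvS') h.symm)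
        omega
      refine Finset.mem_filter.2 ⟨hS' hwS', e, he, hvS'', hwe, hρvw, ?_⟩
      have hfe : e.filter (fun w' => ρ w' < ρ v) ⊆ e \ S' := by
        intro a ha
        rw [Finset.mem_filter] at ha
        refine Finset.mem_sdiff.2 ⟨ha.1, fun haS' => ?_⟩
        exact absurd (hvmin a haS') (not_le.2 ha.2)
      exact le_trans (Nat.cast_le.2 (Finset.card_le_card hfe)) hecard
    have hinjf : Set.InjOn (fun f : Finset ℕ => f.erase v)
        ↑((GG.trim S' l).edges.filter (fun f => v ∈ f)) := by
      intro f1 hf1 f2 hf2 heq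
      have heq' : f1.erase v = f2.erase v := heq
      have h1 : v ∈ f1 := (Finset.mem_filter.1 hf1).2
      have h2 : v ∈ f2 := (Finset.mem_filter.1 hf2).2
      rw [← Finset.insert_erase h1, ← Finset.insert_erase h2, heq']
    calc (GG.trim S' l).degree v
        = ((GG.trim S' l).edges.filter (fun f => v ∈ f)).card := rfl
      _ ≤ Out.powerset.card := Finset.card_le_card_of_injOn _ hsubf hinjf
      _ = 2 ^ Out.card := Finset.card_powerset _
      _ ≤ 2 ^ (H.edges.card * H.verts.card) :=
          Nat.pow_le_pow_right (by norm_num) (hbound v hvvert)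
  exact Nat.sInf_le hmem

end
end

section
/- Let H_1,…,H_k be pairwise non-isomorphic hypergraphs and let c_1,…,c_k be nonzero rational constants. Then there exist hypergraphs F_1,…,F_k such that the k × k matrix M with entries M_{i,j} = c_j · Hom(F_i, H_j) for 1 ≤ i,j ≤ k is invertible. -/
open scoped Classical

noncomputable section

-- ===== auxiliary development =====


def homSet (G H : HGraph) : Set (ℕ → ℕ) :=
  {f | IsHom H G f ∧ ∀ v ∉ H.verts, f v = 0}

lemma homCount_def (G H : HGraph) : homCount G H = (homSet G H).ncard := rfl

lemma finite_zeroOff (V W : Finset ℕ) :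
    {f : ℕ → ℕ | (∀ v ∈ V, f v ∈ W) ∧ ∀ v ∉ V, f v = 0}.Finite := by
  classical
  set S := {f : ℕ → ℕ | (∀ v ∈ V, f v ∈ W) ∧ ∀ v ∉ V, f v = 0} with hS
  have hfin : {g : (↑V : Set ℕ) → ℕ | ∀ v, g v ∈ W}.Finite := by
    have : {g : (↑V : Set ℕ) → ℕ | ∀ v, g v ∈ W} ⊆
        Set.pi Set.univ (fun _ : (↑V : Set ℕ) => (↑W : Set ℕ)) := by
      intro g hg v _
      exact hg v
    exact (Set.Finite.pi (fun _ => W.finite_toSet)).subset this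
  have himg : (fun (f : ℕ → ℕ) => fun v : (↑V : Set ℕ) => f v) '' S ⊆
      {g : (↑V : Set ℕ) → ℕ | ∀ v, g v ∈ W} := by
    rintro g ⟨f, hf, rfl⟩ v
    exact hf.1 v v.2
  refine Set.Finite.of_finite_image (hfin.subset himg) ?_
  intro f hf g hg hfg
  funext v
  by_cases hv : v ∈ V
  · exact congrFun hfg ⟨v, hv⟩
  · rw [hf.2 v hv, hg.2 v hv]

lemma homSet_finite (G H : HGraph) : (homSet G H).Finite :=
  (finite_zeroOff H.verts G.verts).subset fun f hf => ⟨hf.1.1, hf.2⟩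

def surjSet (G H : HGraph) : Set (ℕ → ℕ) :=
  {f | IsHom H G f ∧ (∀ v ∉ H.verts, f v = 0) ∧ H.verts.image f = G.verts ∧
    H.edges.image (fun e => e.image f) = G.edges}

lemma surjSet_finite (G H : HGraph) : (surjSet G H).Finite :=
  (finite_zeroOff H.verts G.verts).subset fun f hf => ⟨hf.1.1, hf.2.1⟩

def surjCount (G H : HGraph) : ℕ := (surjSet G H).ncard

lemma hom_decomp (G H : HGraph) :
    homCount G H = ∑ p ∈ G.verts.powerset ×ˢ G.edges.powerset,
      surjCount ⟨p.1, p.2⟩ H := by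
  classical
  have hset : (homSet_finite G H).toFinset =
      (G.verts.powerset ×ˢ G.edges.powerset).biUnion
        (fun p => (surjSet_finite ⟨p.1, p.2⟩ H).toFinset) := by
    ext f
    simp only [Set.Finite.mem_toFinset, Finset.mem_biUnion, Finset.mem_product,
      Finset.mem_powerset]
    constructor
    · rintro ⟨⟨h1, h2⟩, h3⟩
      refine ⟨(H.verts.image f, H.edges.image fun e => e.image f),
        ⟨Finset.image_subset_iff.mpr h1, Finset.image_subset_iff.mpr h2⟩,
        ⟨⟨fun v hv => Finset.mem_image_of_mem f hv,
          fun e he => Finset.mem_image_of_mem _ he⟩, h3, rfl, rfl⟩⟩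
    · rintro ⟨p, ⟨hp1, hp2⟩, ⟨h1, h2⟩, h3, h4, h5⟩
      exact ⟨⟨fun v hv => hp1 (h1 v hv), fun e he => hp2 (h2 e he)⟩, h3⟩
  rw [homCount_def, Set.ncard_eq_toFinset_card _ (homSet_finite G H), hset,
    Finset.card_biUnion]
  · refine Finset.sum_congr rfl fun p _ => ?_
    rw [surjCount, Set.ncard_eq_toFinset_card _ (surjSet_finite _ H)]
  · intro p _ q _ hpq
    rw [Function.onFun, Finset.disjoint_left]
    intro f hfp hfq
    simp only [Set.Finite.mem_toFinset] at hfp hfq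
    apply hpq
    exact Prod.ext (hfp.2.2.1.symm.trans hfq.2.2.1) (hfp.2.2.2.symm.trans hfq.2.2.2)

lemma surjCount_zero {A : HGraph} (hA : A.Good) {W : Finset ℕ} {E : Finset (Finset ℕ)}
    {e : Finset ℕ} (he : e ∈ E) (hne : ¬ e ⊆ W) : surjCount ⟨W, E⟩ A = 0 := by
  rw [surjCount, Set.ncard_eq_zero (surjSet_finite _ A)]
  ext f
  simp only [Set.mem_empty_iff_false, iff_false, surjSet, Set.mem_setOf_eq]
  rintro ⟨h1, h2, h3, h4⟩
  apply hne
  have : e ∈ A.edges.image (fun e => e.image f) := by rw [h4]; exact he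
  obtain ⟨e₀, he₀, rfl⟩ := Finset.mem_image.mp this
  calc e₀.image f ⊆ A.verts.image f := Finset.image_subset_image (hA e₀ he₀).1
  _ = W := h3

lemma surj_ext {A B : HGraph} (hA : A.Good) (hB : B.Good)
    (h : ∀ F : HGraph, F.Good → homCount F A = homCount F B) :
    ∀ n (C : HGraph), C.Good → C.verts.card + C.edges.card ≤ n →
      surjCount C A = surjCount C B := by
  intro n
  induction n using Nat.strong_induction_on with
  | _ n ih =>
    rintro ⟨Cv, Ce⟩ hC hsize
    have hp₀ : ((Cv, Ce) : Finset ℕ × Finset (Finset ℕ)) ∈ Cv.powerset ×ˢ Ce.powerset := by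
      simp [Finset.mem_product]
    have hdA : homCount ⟨Cv, Ce⟩ A = surjCount ⟨Cv, Ce⟩ A +
        ∑ p ∈ (Cv.powerset ×ˢ Ce.powerset).erase (Cv, Ce), surjCount ⟨p.1, p.2⟩ A := by
      have := hom_decomp ⟨Cv, Ce⟩ A
      rw [← Finset.add_sum_erase _ _ hp₀] at this
      exact this
    have hdB : homCount ⟨Cv, Ce⟩ B = surjCount ⟨Cv, Ce⟩ B +
        ∑ p ∈ (Cv.powerset ×ˢ Ce.powerset).erase (Cv, Ce), surjCount ⟨p.1, p.2⟩ B := by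
      have := hom_decomp ⟨Cv, Ce⟩ B
      rw [← Finset.add_sum_erase _ _ hp₀] at this
      exact this
    have hsum : ∑ p ∈ (Cv.powerset ×ˢ Ce.powerset).erase (Cv, Ce),
        surjCount ⟨p.1, p.2⟩ A
        = ∑ p ∈ (Cv.powerset ×ˢ Ce.powerset).erase (Cv, Ce), surjCount ⟨p.1, p.2⟩ B := by
      refine Finset.sum_congr rfl fun p hp => ?_
      have hpm := Finset.mem_of_mem_erase hp
      have hpne := Finset.ne_of_mem_erase hp
      rw [Finset.mem_product, Finset.mem_powerset, Finset.mem_powerset] at hpm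
      by_cases hgood : ∀ e ∈ p.2, e ⊆ p.1
      · have hG : HGraph.Good ⟨p.1, p.2⟩ := fun e he =>
          ⟨hgood e he, (hC e (hpm.2 he)).2⟩
        have hlt : p.1.card + p.2.card < Cv.card + Ce.card := by
          rcases eq_or_ne p.1 Cv with h1 | h1
          · have h2 : p.2 ≠ Ce := fun h2 => hpne (Prod.ext h1 h2)
            have := Finset.card_lt_card (lt_of_le_of_ne hpm.2 h2)
            have := Finset.card_le_card hpm.1
            omega
          · have := Finset.card_lt_card (lt_of_le_of_ne hpm.1 h1)
            have := Finset.card_le_card hpm.2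
            omega
        exact ih (p.1.card + p.2.card) (lt_of_lt_of_le hlt hsize) ⟨p.1, p.2⟩ hG le_rfl
      · push_neg at hgood
        obtain ⟨e, he, hne⟩ := hgood
        rw [surjCount_zero hA he hne, surjCount_zero hB he hne]
    have hh := h ⟨Cv, Ce⟩ hC
    rw [hdA, hdB, hsum] at hh
    omega

lemma surjSet_self_nonempty (D : HGraph) (hD : D.Good) : (surjSet D D).Nonempty := by
  classical
  refine ⟨fun v => if v ∈ D.verts then v else 0, ?_, ?_, ?_, ?_⟩
  · constructor
    · intro v hv; simp [hv]
    · intro e he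
      have : e.image (fun v => if v ∈ D.verts then v else 0) = e := by
        rw [Finset.image_congr (g := id) ?_, Finset.image_id]
        intro v hv
        simp [(hD e he).1 hv]
      rw [this]; exact he
  · intro v hv; simp [hv]
  · have : D.verts.image (fun v => if v ∈ D.verts then v else 0) = D.verts.image id := by
      refine Finset.image_congr fun v hv => ?_
      rw [Finset.mem_coe] at hv
      simp [hv]
    rw [this, Finset.image_id]
  · have : D.edges.image (fun e => e.image fun v => if v ∈ D.verts then v else 0)
        = D.edges.image id := by
      refine Finset.image_congr fun e he => ?_
      simp only [id]
      rw [Finset.image_congr (g := id) ?_, Finset.image_id]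
      intro v hv
      simp [(hD e he).1 hv]
    rw [this, Finset.image_id]

lemma iso_of_homCount_eq {A B : HGraph} (hA : A.Good) (hB : B.Good)
    (h : ∀ F : HGraph, F.Good → homCount F A = homCount F B) : Isomorphic B A := by
  classical
  have key : ∀ C : HGraph, C.Good → surjCount C A = surjCount C B := fun C hC =>
    surj_ext hA hB h _ C hC le_rfl
  have hBA : (surjSet A B).Nonempty := by
    rw [← Set.ncard_pos (surjSet_finite A B)]
    show 0 < surjCount A B
    rw [← key A hA]
    exact (Set.ncard_pos (surjSet_finite A A)).mpr (surjSet_self_nonempty A hA)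
  have hAB : (surjSet B A).Nonempty := by
    rw [← Set.ncard_pos (surjSet_finite B A)]
    show 0 < surjCount B A
    rw [key B hB]
    exact (Set.ncard_pos (surjSet_finite B B)).mpr (surjSet_self_nonempty B hB)
  obtain ⟨f, hf1, hf2, hf3, hf4⟩ := hBA
  obtain ⟨g, hg1, hg2, hg3, hg4⟩ := hAB
  have hcard : A.verts.card = B.verts.card := by
    have h1 : A.verts.card ≤ B.verts.card := hf3 ▸ Finset.card_image_le
    have h2 : B.verts.card ≤ A.verts.card := hg3 ▸ Finset.card_image_le
    omega
  have hinj : Set.InjOn f ↑B.verts := by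
    apply Finset.card_image_iff.mp
    rw [hf3, hcard]
  refine ⟨f, ⟨?_, hinj, ?_⟩, hf4.symm⟩
  · intro v hv
    exact hf1.1 v hv
  · intro v hv
    rw [← Finset.coe_image, hf3]
    exact hv


def unitHG : HGraph := ⟨{0}, {{0}}⟩

lemma unitHG_good : unitHG.Good := by
  intro e he
  simp only [unitHG, Finset.mem_singleton] at he
  subst he
  exact ⟨by simp [unitHG], by simp⟩

lemma homCount_unit (H : HGraph) (hH : H.Good) : homCount unitHG H = 1 := by
  have : homSet unitHG H = {fun _ => 0} := by
    ext f
    constructor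
    · rintro ⟨⟨h1, _⟩, h3⟩
      have : f = fun _ => 0 := by
        funext v
        by_cases hv : v ∈ H.verts
        · have := h1 v hv
          simpa [unitHG] using this
        · exact h3 v hv
      simp [this]
    · rintro rfl
      refine ⟨⟨fun v _ => by simp [unitHG], fun e he => ?_⟩, fun v _ => rfl⟩
      rw [Finset.image_const (hH e he).2]
      simp [unitHG]
  rw [homCount_def, this, Set.ncard_singleton]

lemma tensor_good {F G : HGraph} (hF : F.Good) (hG : G.Good) : (tensor F G).Good := by
  intro e he
  simp only [tensor, Finset.mem_filter, Finset.mem_powerset] at he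
  refine ⟨he.1, ?_⟩
  rw [← Finset.nonempty_iff_ne_empty.symm]
  rintro rfl
  have := (hF _ he.2.1).2
  simp at this

lemma mem_tensor_verts {F G : HGraph} {m : ℕ} (hm : m ∈ (tensor F G).verts) :
    (Nat.unpair m).1 ∈ F.verts ∧ (Nat.unpair m).2 ∈ G.verts := by
  simp only [tensor, Finset.mem_image, Finset.mem_product] at hm
  obtain ⟨p, hp, rfl⟩ := hm
  simpa using hp

lemma homCount_tensor (F G H : HGraph) (hH : H.Good) :
    homCount (tensor F G) H = homCount F H * homCount G H := by
  classical
  set Φ : (ℕ → ℕ) → (ℕ → ℕ) × (ℕ → ℕ) := fun f =>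
    (fun v => if v ∈ H.verts then (Nat.unpair (f v)).1 else 0,
     fun v => if v ∈ H.verts then (Nat.unpair (f v)).2 else 0) with hΦ
  have hbij : Set.BijOn Φ (homSet (tensor F G) H) (homSet F H ×ˢ homSet G H) := by
    refine ⟨?_, ?_, ?_⟩
    · rintro f ⟨⟨h1, h2⟩, h3⟩
      constructor
      · refine ⟨⟨fun v hv => ?_, fun e he => ?_⟩, fun v hv => if_neg hv⟩
        · show (if v ∈ H.verts then (Nat.unpair (f v)).1 else 0) ∈ F.verts
          rw [if_pos hv]
          exact (mem_tensor_verts (h1 v hv)).1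
        · have heq : e.image (Φ f).1 = (e.image f).image fun m => (Nat.unpair m).1 := by
            rw [Finset.image_image]
            refine Finset.image_congr fun v hv => ?_
            rw [Finset.mem_coe] at hv
            exact if_pos ((hH e he).1 hv)
          rw [heq]
          have := h2 e he
          simp only [tensor, Finset.mem_filter] at this
          exact this.2.1
      · refine ⟨⟨fun v hv => ?_, fun e he => ?_⟩, fun v hv => if_neg hv⟩
        · show (if v ∈ H.verts then (Nat.unpair (f v)).2 else 0) ∈ G.verts
          rw [if_pos hv]
          exact (mem_tensor_verts (h1 v hv)).2
        · have heq : e.image (Φ f).2 = (e.image f).image fun m => (Nat.unpair m).2 := by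
            rw [Finset.image_image]
            refine Finset.image_congr fun v hv => ?_
            rw [Finset.mem_coe] at hv
            exact if_pos ((hH e he).1 hv)
          rw [heq]
          have := h2 e he
          simp only [tensor, Finset.mem_filter] at this
          exact this.2.2
    · rintro f ⟨⟨hf1, _⟩, hf3⟩ g ⟨⟨hg1, _⟩, hg3⟩ hfg
      funext v
      by_cases hv : v ∈ H.verts
      · have e1 := congrFun (congrArg Prod.fst hfg) v
        have e2 := congrFun (congrArg Prod.snd hfg) v
        simp only [hΦ, if_pos hv] at e1 e2
        have : Nat.pair (Nat.unpair (f v)).1 (Nat.unpair (f v)).2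
            = Nat.pair (Nat.unpair (g v)).1 (Nat.unpair (g v)).2 := by rw [e1, e2]
        simpa [Nat.pair_unpair] using this
      · rw [hf3 v hv, hg3 v hv]
    · rintro ⟨f₁, f₂⟩ ⟨⟨⟨h11, h12⟩, h13⟩, ⟨⟨h21, h22⟩, h23⟩⟩
      refine ⟨fun v => if v ∈ H.verts then Nat.pair (f₁ v) (f₂ v) else 0, ?_, ?_⟩
      · refine ⟨⟨fun v hv => ?_, fun e he => ?_⟩, fun v hv => if_neg hv⟩
        · show (if v ∈ H.verts then Nat.pair (f₁ v) (f₂ v) else 0) ∈ (tensor F G).verts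
          rw [if_pos hv]
          exact Finset.mem_image.mpr ⟨(f₁ v, f₂ v),
            Finset.mem_product.mpr ⟨h11 v hv, h21 v hv⟩, rfl⟩
        · simp only [tensor, Finset.mem_filter, Finset.mem_powerset]
          have hsub : ∀ v ∈ e, v ∈ H.verts := fun v hv => (hH e he).1 hv
          refine ⟨?_, ?_, ?_⟩
          · intro m hm
            obtain ⟨v, hv, rfl⟩ := Finset.mem_image.mp hm
            rw [if_pos (hsub v hv)]
            exact Finset.mem_image.mpr ⟨(f₁ v, f₂ v),
              Finset.mem_product.mpr ⟨h11 v (hsub v hv), h21 v (hsub v hv)⟩, rfl⟩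
          · have : (e.image fun v => if v ∈ H.verts then Nat.pair (f₁ v) (f₂ v) else 0).image
                (fun m => (Nat.unpair m).1) = e.image f₁ := by
              rw [Finset.image_image]
              refine Finset.image_congr fun v hv => ?_
              rw [Finset.mem_coe] at hv
              simp [if_pos (hsub v hv), Nat.unpair_pair]
            rw [this]
            exact h12 e he
          · have : (e.image fun v => if v ∈ H.verts then Nat.pair (f₁ v) (f₂ v) else 0).image
                (fun m => (Nat.unpair m).2) = e.image f₂ := by
              rw [Finset.image_image]
              refine Finset.image_congr fun v hv => ?_
              rw [Finset.mem_coe] at hv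
              simp [if_pos (hsub v hv), Nat.unpair_pair]
            rw [this]
            exact h22 e he
      · refine Prod.ext ?_ ?_ <;> funext v <;> by_cases hv : v ∈ H.verts <;>
          simp only [hΦ, if_pos, if_neg, hv, if_true, if_false, Nat.unpair_pair]
        · exact (h13 v hv).symm
        · exact (h23 v hv).symm
  have h1 : homCount (tensor F G) H = (homSet F H ×ˢ homSet G H).ncard := by
    rw [homCount_def, ← hbij.image_eq, Set.ncard_image_of_injOn hbij.injOn]
  rw [h1, homCount_def, homCount_def, ← Nat.card_coe_set_eq, ← Nat.card_coe_set_eq,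
    ← Nat.card_coe_set_eq, Nat.card_congr (Equiv.Set.prod _ _), Nat.card_prod]

theorem stmt17 (k : ℕ) (Hs : Fin k → HGraph) (hHs : ∀ i, (Hs i).Good)
    (hiso : ∀ i j, i ≠ j → ¬ Isomorphic (Hs i) (Hs j))
    (c : Fin k → ℚ) (hc : ∀ i, c i ≠ 0) :
    ∃ F : Fin k → HGraph, (∀ i, (F i).Good) ∧
      IsUnit (Matrix.of fun i j : Fin k => c j * (homCount (F i) (Hs j) : ℚ)) := by
  classical
  set T : Set (Fin k → ℚ) :=
    {v | ∃ F : HGraph, F.Good ∧ v = fun j => (homCount F (Hs j) : ℚ)} with hT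
  -- 1 ∈ T
  have h1 : (1 : Fin k → ℚ) ∈ T := by
    refine ⟨unitHG, unitHG_good, ?_⟩
    funext j
    rw [homCount_unit (Hs j) (hHs j)]
    norm_num
  -- multiplicatively closed
  have hmul : ∀ u ∈ T, ∀ v ∈ T, u * v ∈ T := by
    rintro u ⟨F, hF, rfl⟩ v ⟨G, hG, rfl⟩
    refine ⟨tensor F G, tensor_good hF hG, ?_⟩
    funext j
    simp only [Pi.mul_apply, homCount_tensor F G (Hs j) (hHs j)]
    push_cast
    ring
  -- span is closed under multiplication
  have hspanmulT : ∀ v ∈ Submodule.span ℚ T, ∀ u ∈ T, u * v ∈ Submodule.span ℚ T := by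
    intro v hv
    induction hv using Submodule.span_induction with
    | mem x hx => exact fun u hu => Submodule.subset_span (hmul u hu x hx)
    | zero => intro u hu; rw [mul_zero]; exact (Submodule.span ℚ T).zero_mem
    | add x y hx hy ihx ihy =>
      intro u hu
      rw [mul_add]
      exact (Submodule.span ℚ T).add_mem (ihx u hu) (ihy u hu)
    | smul a x hx ihx =>
      intro u hu
      rw [mul_smul_comm]
      exact (Submodule.span ℚ T).smul_mem a (ihx u hu)
  have hspanmul : ∀ u ∈ Submodule.span ℚ T, ∀ v ∈ Submodule.span ℚ T,
      u * v ∈ Submodule.span ℚ T := by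
    intro u hu
    induction hu using Submodule.span_induction with
    | mem x hx => exact fun v hv => hspanmulT v hv x hx
    | zero => intro v hv; rw [zero_mul]; exact (Submodule.span ℚ T).zero_mem
    | add x y hx hy ihx ihy =>
      intro v hv
      rw [add_mul]
      exact (Submodule.span ℚ T).add_mem (ihx v hv) (ihy v hv)
    | smul a x hx ihx =>
      intro v hv
      rw [smul_mul_assoc]
      exact (Submodule.span ℚ T).smul_mem a (ihx v hv)
  -- separation
  have hsep : ∀ i j : Fin k, i ≠ j → ∃ v ∈ T, v i ≠ v j := by
    intro i j hij
    by_contra hcon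
    push_neg at hcon
    have : ∀ F : HGraph, F.Good → homCount F (Hs i) = homCount F (Hs j) := by
      intro F hF
      have h2 : ((homCount F (Hs i) : ℚ)) = (homCount F (Hs j) : ℚ) :=
        hcon (fun l => (homCount F (Hs l) : ℚ)) ⟨F, hF, rfl⟩
      exact_mod_cast h2
    exact hiso j i (Ne.symm hij) (iso_of_homCount_eq (hHs i) (hHs j) this)
  -- indicators are in the span
  have hsingle : ∀ i : Fin k, Pi.single i (1 : ℚ) ∈ Submodule.span ℚ T := by
    intro i
    choose vv hvT hvne using fun j (h : j ≠ i) => hsep i j (Ne.symm h)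
    set u : Fin k → (Fin k → ℚ) := fun j =>
      if h : j ≠ i then vv j h - (vv j h j) • (1 : Fin k → ℚ) else 1 with hu
    have humem : ∀ j, u j ∈ Submodule.span ℚ T := by
      intro j
      by_cases h : j ≠ i
      · rw [hu]; simp only [dif_pos h]
        exact Submodule.sub_mem _ (Submodule.subset_span (hvT j h))
          (Submodule.smul_mem _ _ (Submodule.subset_span h1))
      · rw [hu]; simp only [dif_neg h]
        exact Submodule.subset_span h1
    set w : Fin k → ℚ := ∏ j ∈ Finset.univ.erase i, u j with hw
    have hwmem : w ∈ Submodule.span ℚ T := by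
      rw [hw]
      refine Finset.prod_induction u (· ∈ Submodule.span ℚ T)
        (fun a b ha hb => hspanmul a ha b hb) (Submodule.subset_span h1) fun j _ => humem j
    have hwzero : ∀ j, j ≠ i → w j = 0 := by
      intro j hj
      rw [hw, Finset.prod_apply]
      refine Finset.prod_eq_zero (Finset.mem_erase.mpr ⟨hj, Finset.mem_univ j⟩) ?_
      rw [hu]
      simp only [dif_pos hj, Pi.sub_apply, Pi.smul_apply, Pi.one_apply, smul_eq_mul, mul_one,
        sub_self]
    have hwi : w i ≠ 0 := by
      rw [hw, Finset.prod_apply]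
      refine Finset.prod_ne_zero_iff.mpr fun j hj => ?_
      have hj' : j ≠ i := (Finset.mem_erase.mp hj).1
      rw [hu]
      simp only [dif_pos hj', Pi.sub_apply, Pi.smul_apply, Pi.one_apply, smul_eq_mul, mul_one]
      exact sub_ne_zero_of_ne (hvne j hj')
    have : Pi.single i (1 : ℚ) = (w i)⁻¹ • w := by
      funext j
      by_cases hj : j = i
      · subst hj
        simp [inv_mul_cancel₀ hwi]
      · simp [Pi.single_eq_of_ne hj, hwzero j hj]
    rw [this]
    exact Submodule.smul_mem _ _ hwmem
  -- span T = ⊤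
  have hspan : Submodule.span ℚ T = ⊤ := by
    rw [eq_top_iff]
    rw [← (Pi.basisFun ℚ (Fin k)).span_eq]
    rw [Submodule.span_le]
    rintro x ⟨i, rfl⟩
    rw [Pi.basisFun_apply]
    exact hsingle i
  -- extract a basis inside T
  obtain ⟨b, hbT, hbspan, hbli⟩ := exists_linearIndependent ℚ T
  rw [hspan] at hbspan
  have hbfin : b.Finite := hbli.finite
  have : Fintype b := hbfin.fintype
  have hbbasis : Module.Basis b ℚ (Fin k → ℚ) := Module.Basis.mk hbli (by rw [Subtype.range_coe, hbspan])
  have hcard : Fintype.card b = k := by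
    have := Module.finrank_eq_card_basis hbbasis
    rw [Module.finrank_fin_fun] at this
    exact this.symm
  obtain e := Fintype.equivFinOfCardEq hcard
  set r : Fin k → (Fin k → ℚ) := fun i => (e.symm i : Fin k → ℚ) with hr
  have hrT : ∀ i, r i ∈ T := fun i => hbT (e.symm i).2
  have hrli : LinearIndependent ℚ r := by
    have : r = (fun x : b => (x : Fin k → ℚ)) ∘ e.symm := rfl
    rw [this]
    exact hbli.comp e.symm e.symm.injective
  choose F hFgood hFval using fun i => hrT i
  refine ⟨F, hFgood, ?_⟩
  have hA : IsUnit (Matrix.of fun i j : Fin k => (homCount (F i) (Hs j) : ℚ)) := by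
    rw [← Matrix.linearIndependent_rows_iff_isUnit]
    have : (fun i => (Matrix.of fun i j : Fin k => (homCount (F i) (Hs j) : ℚ)) i) = r := by
      funext i
      rw [hFval i]
      rfl
    change LinearIndependent ℚ (fun i => (Matrix.of fun i j : Fin k => (homCount (F i) (Hs j) : ℚ)) i)
    rw [this]
    exact hrli
  have hD : IsUnit (Matrix.diagonal c) := by
    rw [Matrix.isUnit_iff_isUnit_det, Matrix.det_diagonal]
    exact isUnit_iff_ne_zero.mpr (Finset.prod_ne_zero_iff.mpr fun i _ => hc i)
  have : (Matrix.of fun i j : Fin k => c j * (homCount (F i) (Hs j) : ℚ))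
      = (Matrix.of fun i j : Fin k => (homCount (F i) (Hs j) : ℚ)) * Matrix.diagonal c := by
    ext i j
    rw [Matrix.mul_diagonal]
    simp [mul_comm]
  rw [this]
  exact hA.mul hD


end
end
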